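/- arXiv:1611.01254 — 4 statements merged into one kernel-verified Lean document; each statement's English description precedes it below -/
import Mathlib

section
/- Let R be a stable conservative Q-matrix on ℕ with total rates r_i, and let A be a bounded stable conservative Q-matrix with γ = sup_i a_i < ∞, where a_i = -a_ii. Set Q = R + A, a'_ij = a_ij + γ δ_ij ≥ 0, and q'_ik = a'_ik + (1 - δ_ik) r_ik. Define the successive approximations R^(0)_ij(t) = δ_ij e^{-r_i t}, R^(n+1)_ij(t) = Σ_{k≠i} ∫_0^t e^{-r_i(t−s)} r_ik R^(n)_kj(s) ds, and Q^(0)_ij(t) = δ_ij e^{-(r_i+γ)t}, Q^(n+1)_ij(t) = Σ_k ∫_0^t e^{-(r_i+γ)(t−s)} q'_ik Q^(n)_kj(s) ds. Then for every n ≥ 0, Q^(n)_ij(t) = Σ_{p=0}^{n−1} Σ_{l,k} ∫_0^t e^{-γ(t−s)} R^(n−p−1)_il(t−s) a'_lk Q^(p)_kj(s) ds + R^(n)_ij(t) e^{-γ t} (with the empty sum equal to 0 when n = 0). -/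
open MeasureTheory ENNReal

noncomputable def RnAux (R : ℕ → ℕ → ℝ) : ℕ → ℕ → ℕ → ℝ → ℝ≥0∞
  | 0, i, j, t => if i = j then ENNReal.ofReal (Real.exp (R i i * t)) else 0
  | (n+1), i, j, t => ∑' k, if k = i then 0 else
      ∫⁻ s in Set.Ioc (0 : ℝ) t,
        ENNReal.ofReal (Real.exp (R i i * (t - s)) * R i k) * RnAux R n k j s

noncomputable def QnAux (R A : ℕ → ℕ → ℝ) (γ : ℝ) : ℕ → ℕ → ℕ → ℝ → ℝ≥0∞
  | 0, i, j, t => if i = j then ENNReal.ofReal (Real.exp ((R i i - γ) * t)) else 0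
  | (n+1), i, j, t => ∑' k, ∫⁻ s in Set.Ioc (0 : ℝ) t,
      ENNReal.ofReal (Real.exp ((R i i - γ) * (t - s)) *
        ((A i k + if i = k then γ else 0) + if k = i then 0 else R i k)) * QnAux R A γ n k j s

lemma measurable_setLIntegral_Ioc (g : ℝ → ℝ≥0∞) :
    Measurable fun t => ∫⁻ s in Set.Ioc (0:ℝ) t, g s := by
  apply Monotone.measurable
  intro t t' h
  exact lintegral_mono_set (Set.Ioc_subset_Ioc_right h)

lemma conv_split (c x t : ℝ) (g : ℝ → ℝ≥0∞) :
    (∫⁻ s in Set.Ioc (0:ℝ) t, ENNReal.ofReal (Real.exp (c * (t - s)) * x) * g s)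
      = ENNReal.ofReal (Real.exp (c * t)) *
        ∫⁻ s in Set.Ioc (0:ℝ) t, ENNReal.ofReal (Real.exp (-(c * s)) * x) * g s := by
  rw [← lintegral_const_mul' _ _ ofReal_ne_top]
  apply lintegral_congr
  intro s
  rw [← mul_assoc, ← ENNReal.ofReal_mul (Real.exp_nonneg _), ← mul_assoc,
    ← Real.exp_add]
  congr 3
  ring

lemma measurable_conv (c x : ℝ) (g : ℝ → ℝ≥0∞) :
    Measurable fun t => ∫⁻ s in Set.Ioc (0:ℝ) t,
      ENNReal.ofReal (Real.exp (c * (t - s)) * x) * g s := by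
  simp only [conv_split c x _ g]
  exact (ENNReal.measurable_ofReal.comp (Real.measurable_exp.comp
    (measurable_const_mul c))).mul (measurable_setLIntegral_Ioc _)

lemma measurable_coef (c x t : ℝ) (ψ : ℝ → ℝ≥0∞) (hψ : Measurable ψ) :
    Measurable fun s : ℝ => ENNReal.ofReal (Real.exp (c * (t - s)) * x) * ψ s :=
  (ENNReal.measurable_ofReal.comp ((Real.measurable_exp.comp
    ((measurable_const.sub measurable_id).const_mul c)).mul_const x)).mul hψ

lemma measurable_RnAux (R : ℕ → ℕ → ℝ) : ∀ n i j, Measurable (RnAux R n i j) := by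
  intro n
  induction n with
  | zero =>
    intro i j
    by_cases h : i = j <;> simp only [RnAux, h, if_true, if_false]
    · exact ENNReal.measurable_ofReal.comp (Real.measurable_exp.comp
        (measurable_const_mul _))
    · exact measurable_const
  | succ n ih =>
    intro i j
    apply Measurable.ennreal_tsum
    intro k
    by_cases hk : k = i <;> simp only [hk, if_true, if_false]
    · exact measurable_const
    · exact measurable_conv _ _ _

lemma measurable_QnAux (R A : ℕ → ℕ → ℝ) (γ : ℝ) :
    ∀ n i j, Measurable (QnAux R A γ n i j) := by
  intro n
  induction n with
  | zero =>
    intro i j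
    by_cases h : i = j <;> simp only [QnAux, h, if_true, if_false]
    · exact ENNReal.measurable_ofReal.comp (Real.measurable_exp.comp
        (measurable_const_mul _))
    · exact measurable_const
  | succ n ih =>
    intro i j
    exact Measurable.ennreal_tsum fun k => measurable_conv _ _ _

lemma measurable_lintegral_Ioc_param {H : ℝ → ℝ → ℝ≥0∞}
    (hH : Measurable fun q : ℝ × ℝ => H q.1 q.2) :
    Measurable fun s => ∫⁻ u in Set.Ioc (0:ℝ) s, H s u := by
  have h1 : ∀ s, (∫⁻ u in Set.Ioc (0:ℝ) s, H s u)
      = ∫⁻ u, ({q : ℝ × ℝ | 0 < q.2 ∧ q.2 ≤ q.1}.indicator (fun q => H q.1 q.2)) (s, u) := by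
    intro s
    rw [← lintegral_indicator measurableSet_Ioc]
    apply lintegral_congr
    intro u
    by_cases hu : u ∈ Set.Ioc 0 s
    · rw [Set.indicator_of_mem hu, Set.indicator_of_mem (by exact ⟨hu.1, hu.2⟩)]
    · rw [Set.indicator_of_notMem hu, Set.indicator_of_notMem (fun hm => hu ⟨hm.1, hm.2⟩)]
  simp only [h1]
  apply Measurable.lintegral_prod_right'
  exact hH.indicator ((measurableSet_lt measurable_const measurable_snd).inter
    (measurableSet_le measurable_snd measurable_fst))

lemma lintegral_Ioc_translate (u b : ℝ) (ψ : ℝ → ℝ≥0∞) :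
    ∫⁻ s in Set.Ioc u (b + u), ψ (s - u) = ∫⁻ y in Set.Ioc 0 b, ψ y := by
  rw [← lintegral_indicator measurableSet_Ioc, ← lintegral_indicator measurableSet_Ioc]
  have h1 : ∀ s : ℝ, (Set.Ioc u (b+u)).indicator (fun s => ψ (s - u)) s
      = (Set.Ioc (0:ℝ) b).indicator ψ (s + -u) := by
    intro s
    by_cases hs : s ∈ Set.Ioc u (b + u)
    · rw [Set.indicator_of_mem hs, Set.indicator_of_mem]
      · rfl
      · constructor
        · linarith [hs.1]
        · linarith [hs.2]
    · rw [Set.indicator_of_notMem hs, Set.indicator_of_notMem]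
      intro hmem
      exact hs ⟨by linarith [hmem.1], by linarith [hmem.2]⟩
  simp only [h1]
  exact lintegral_add_right_eq_self _ (-u)

lemma fubini_core (c γ x t : ℝ) (g h : ℝ → ℝ≥0∞) (hg : Measurable g) (hh : Measurable h) :
    (∫⁻ s in Set.Ioc (0:ℝ) t, ENNReal.ofReal (Real.exp ((c - γ) * (t - s)) * x) *
      ∫⁻ u in Set.Ioc (0:ℝ) s, ENNReal.ofReal (Real.exp (-γ * (s - u))) * g (s - u) * h u)
    = ∫⁻ u in Set.Ioc (0:ℝ) t, ENNReal.ofReal (Real.exp (-γ * (t - u))) *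
        (∫⁻ y in Set.Ioc (0:ℝ) (t - u), ENNReal.ofReal (Real.exp (c * ((t - u) - y)) * x) * g y)
        * h u := by
  set F : ℝ → ℝ → ℝ≥0∞ := fun s u =>
    ENNReal.ofReal (Real.exp (c * (t - s)) * x) *
      (ENNReal.ofReal (Real.exp (-γ * (t - u))) * (g (s - u) * h u)) with hF
  have hFmeas : Measurable (Function.uncurry F) := by
    apply Measurable.mul
    · exact ENNReal.measurable_ofReal.comp
        ((Real.measurable_exp.comp ((measurable_const.sub measurable_fst).const_mul c)).mul_const x)
    · exact (ENNReal.measurable_ofReal.comp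
        ((Real.measurable_exp.comp ((measurable_const.sub measurable_snd).const_mul (-γ))))).mul
        ((hg.comp (measurable_fst.sub measurable_snd)).mul (hh.comp measurable_snd))
  set K : ℝ → ℝ → ℝ≥0∞ := fun s u =>
    if 0 < u ∧ u < s ∧ s ≤ t then F s u else 0 with hK
  have hKmeas : Measurable (Function.uncurry K) := by
    have hS : MeasurableSet {q : ℝ × ℝ | 0 < q.2 ∧ q.2 < q.1 ∧ q.1 ≤ t} :=
      (measurableSet_lt measurable_const measurable_snd).inter
        ((measurableSet_lt measurable_snd measurable_fst).inter
          (measurableSet_le measurable_fst measurable_const))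
    exact Measurable.ite hS hFmeas measurable_const
  have key : ∀ s u : ℝ,
      ENNReal.ofReal (Real.exp ((c - γ) * (t - s)) * x) *
        (ENNReal.ofReal (Real.exp (-γ * (s - u))) * g (s - u) * h u) = F s u := by
    intro s u
    have h1 : ENNReal.ofReal (Real.exp ((c - γ) * (t - s)) * x) *
        ENNReal.ofReal (Real.exp (-γ * (s - u)))
        = ENNReal.ofReal (Real.exp (c * (t - s)) * x) *
          ENNReal.ofReal (Real.exp (-γ * (t - u))) := by
      rw [mul_comm, ← ENNReal.ofReal_mul (Real.exp_nonneg _), mul_comm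
        (ENNReal.ofReal (Real.exp (c * (t - s)) * x)), ← ENNReal.ofReal_mul (Real.exp_nonneg _)]
      congr 1
      rw [← mul_assoc, ← Real.exp_add, ← mul_assoc, ← Real.exp_add]
      congr 2
      ring
    calc ENNReal.ofReal (Real.exp ((c - γ) * (t - s)) * x) *
          (ENNReal.ofReal (Real.exp (-γ * (s - u))) * g (s - u) * h u)
        = (ENNReal.ofReal (Real.exp ((c - γ) * (t - s)) * x) *
            ENNReal.ofReal (Real.exp (-γ * (s - u)))) * (g (s - u) * h u) := by ring
      _ = (ENNReal.ofReal (Real.exp (c * (t - s)) * x) *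
            ENNReal.ofReal (Real.exp (-γ * (t - u)))) * (g (s - u) * h u) := by rw [h1]
      _ = F s u := by simp only [hF]; ring
  have hL : (∫⁻ s in Set.Ioc (0:ℝ) t, ENNReal.ofReal (Real.exp ((c - γ) * (t - s)) * x) *
      ∫⁻ u in Set.Ioc (0:ℝ) s, ENNReal.ofReal (Real.exp (-γ * (s - u))) * g (s - u) * h u)
      = ∫⁻ s, ∫⁻ u, K s u := by
    rw [← lintegral_indicator measurableSet_Ioc]
    apply lintegral_congr
    intro s
    by_cases hs : s ∈ Set.Ioc (0:ℝ) t
    · rw [Set.indicator_of_mem hs]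
      rw [← lintegral_const_mul' _ _ ofReal_ne_top]
      rw [lintegral_congr_ae (Filter.Eventually.of_forall fun u => key s u)]
      rw [setLIntegral_congr (μ := volume) (Ioo_ae_eq_Ioc (a := (0:ℝ)) (b := s)).symm]
      rw [← lintegral_indicator measurableSet_Ioo]
      apply lintegral_congr
      intro u
      by_cases hu : u ∈ Set.Ioo (0:ℝ) s
      · rw [Set.indicator_of_mem hu]
        simp only [hK]
        exact (if_pos ⟨hu.1, hu.2, hs.2⟩).symm
      · rw [Set.indicator_of_notMem hu]
        simp only [hK]
        exact (if_neg fun ⟨h1', h2', _⟩ => hu ⟨h1', h2'⟩).symm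
    · rw [Set.indicator_of_notMem hs]
      symm
      simp only [hK]
      have hz : ∀ u : ℝ, (if 0 < u ∧ u < s ∧ s ≤ t then F s u else 0) = 0 := fun u =>
        if_neg fun ⟨h1', h2', h3'⟩ => hs ⟨lt_trans h1' h2', h3'⟩
      simp only [hz, lintegral_const, zero_mul]
  have hR : (∫⁻ u in Set.Ioc (0:ℝ) t, ENNReal.ofReal (Real.exp (-γ * (t - u))) *
        (∫⁻ y in Set.Ioc (0:ℝ) (t - u), ENNReal.ofReal (Real.exp (c * ((t - u) - y)) * x) * g y)
        * h u)
      = ∫⁻ u, ∫⁻ s, K s u := by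
    rw [← lintegral_indicator measurableSet_Ioc]
    apply lintegral_congr
    intro u
    by_cases hu : u ∈ Set.Ioc (0:ℝ) t
    · rw [Set.indicator_of_mem hu]
      have hψ : Measurable fun s : ℝ =>
          ENNReal.ofReal (Real.exp (c * (t - s)) * x) * g (s - u) := by
        apply Measurable.mul
        · exact ENNReal.measurable_ofReal.comp
            ((Real.measurable_exp.comp ((measurable_const.sub measurable_id).const_mul c)).mul_const x)
        · exact hg.comp (measurable_id.sub measurable_const)
      have htrans : (∫⁻ y in Set.Ioc (0:ℝ) (t - u),
            ENNReal.ofReal (Real.exp (c * ((t - u) - y)) * x) * g y)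
          = ∫⁻ s in Set.Ioc u t, ENNReal.ofReal (Real.exp (c * (t - s)) * x) * g (s - u) := by
        rw [← lintegral_Ioc_translate u (t - u) (fun y =>
          ENNReal.ofReal (Real.exp (c * ((t - u) - y)) * x) * g y), sub_add_cancel]
        apply lintegral_congr
        intro s
        have harg : t - u - (s - u) = t - s := by ring
        rw [harg]
      rw [htrans, mul_assoc]
      have e1 : (∫⁻ s in Set.Ioc u t,
            ENNReal.ofReal (Real.exp (c * (t - s)) * x) * g (s - u)) * h u
          = ∫⁻ s in Set.Ioc u t,
              (ENNReal.ofReal (Real.exp (c * (t - s)) * x) * g (s - u)) * h u :=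
        (lintegral_mul_const _ hψ).symm
      rw [e1, ← lintegral_const_mul' _ _ ofReal_ne_top,
        ← lintegral_indicator measurableSet_Ioc]
      apply lintegral_congr
      intro s
      by_cases hsm : s ∈ Set.Ioc u t
      · rw [Set.indicator_of_mem hsm]
        simp only [hK]
        rw [if_pos ⟨hu.1, hsm.1, hsm.2⟩]
        simp only [hF]
        ring
      · rw [Set.indicator_of_notMem hsm]
        simp only [hK]
        exact (if_neg fun ⟨_, h2', h3'⟩ => hsm ⟨h2', h3'⟩).symm
    · rw [Set.indicator_of_notMem hu]
      symm
      simp only [hK]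
      have hz : ∀ s : ℝ, (if 0 < u ∧ u < s ∧ s ≤ t then F s u else 0) = 0 := fun s =>
        if_neg fun ⟨h1', h2', h3'⟩ => hu ⟨h1', le_of_lt (lt_of_lt_of_le h2' h3')⟩
      simp only [hz, lintegral_const, zero_mul]
  rw [hL, hR]
  exact lintegral_lintegral_swap hKmeas.aemeasurable

lemma Rn_eq (R : ℕ → ℕ → ℝ) (Rn : ℕ → ℕ → ℕ → ℝ → ℝ≥0∞)
    (hRn0 : ∀ i j t, 0 ≤ t → Rn 0 i j t =
      if i = j then ENNReal.ofReal (Real.exp (R i i * t)) else 0)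
    (hRnrec : ∀ n i j t, 0 ≤ t → Rn (n + 1) i j t =
      ∑' k, if k = i then 0 else
        ∫⁻ s in Set.Ioc (0 : ℝ) t,
          ENNReal.ofReal (Real.exp (R i i * (t - s)) * R i k) * Rn n k j s) :
    ∀ n i j t, 0 ≤ t → Rn n i j t = RnAux R n i j t := by
  intro n
  induction n with
  | zero =>
    intro i j t ht
    rw [hRn0 i j t ht]
    simp only [RnAux]
  | succ n ih =>
    intro i j t ht
    rw [hRnrec n i j t ht]
    simp only [RnAux]
    apply tsum_congr
    intro k
    by_cases hk : k = i
    · simp [hk]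
    · simp only [if_neg hk]
      apply setLIntegral_congr_fun measurableSet_Ioc
      intro s hs
      beta_reduce
      rw [ih k j s hs.1.le]

lemma Qn_eq (R A : ℕ → ℕ → ℝ) (γ : ℝ) (Qn : ℕ → ℕ → ℕ → ℝ → ℝ≥0∞)
    (hQn0 : ∀ i j t, 0 ≤ t → Qn 0 i j t =
      if i = j then ENNReal.ofReal (Real.exp ((R i i - γ) * t)) else 0)
    (hQnrec : ∀ n i j t, 0 ≤ t → Qn (n + 1) i j t =
      ∑' k, ∫⁻ s in Set.Ioc (0 : ℝ) t,
        ENNReal.ofReal (Real.exp ((R i i - γ) * (t - s)) *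
          ((A i k + if i = k then γ else 0) + if k = i then 0 else R i k)) * Qn n k j s) :
    ∀ n i j t, 0 ≤ t → Qn n i j t = QnAux R A γ n i j t := by
  intro n
  induction n with
  | zero =>
    intro i j t ht
    rw [hQn0 i j t ht]
    simp only [QnAux]
  | succ n ih =>
    intro i j t ht
    rw [hQnrec n i j t ht]
    simp only [QnAux]
    apply tsum_congr
    intro k
    apply setLIntegral_congr_fun measurableSet_Ioc
    intro s hs
    beta_reduce
    rw [ih k j s hs.1.le]
lemma main_aux (R A : ℕ → ℕ → ℝ) (γ : ℝ)
    (hRpos : ∀ i j, i ≠ j → 0 ≤ R i j)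
    (ha' : ∀ l k, 0 ≤ A l k + if l = k then γ else 0) :
    ∀ n i j t, 0 ≤ t → QnAux R A γ n i j t =
      (∑ p ∈ Finset.range n, ∑' l, ∑' k,
        ∫⁻ s in Set.Ioc (0:ℝ) t,
          ENNReal.ofReal (Real.exp (-γ * (t - s))) * RnAux R (n - p - 1) i l (t - s) *
            ENNReal.ofReal (A l k + if l = k then γ else 0) * QnAux R A γ p k j s)
      + RnAux R n i j t * ENNReal.ofReal (Real.exp (-γ * t)) := by
  intro n
  induction n with
  | zero =>
    intro i j t ht
    simp only [Finset.range_zero, Finset.sum_empty, zero_add, QnAux, RnAux]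
    by_cases h : i = j
    · simp only [h, if_true]
      rw [← ENNReal.ofReal_mul (Real.exp_nonneg _), ← Real.exp_add]
      congr 2
      ring
    · simp [h]
  | succ n ih =>
    intro i j t ht
    have measQ : ∀ p m jj, Measurable (QnAux R A γ p m jj) := measurable_QnAux R A γ
    have measR : ∀ q k l, Measurable (RnAux R q k l) := measurable_RnAux R
    have hb : ∀ k : ℕ, 0 ≤ (if k = i then 0 else R i k) := by
      intro k
      by_cases hk : k = i
      · simp [hk]
      · simpa [hk] using hRpos i k (fun h => hk h.symm)
    -- Step 1 : split the recursion integrand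
    have hsplit : QnAux R A γ (n+1) i j t
        = (∑' k, ∫⁻ s in Set.Ioc (0:ℝ) t,
            ENNReal.ofReal (Real.exp ((R i i - γ) * (t - s)) * (A i k + if i = k then γ else 0)) *
              QnAux R A γ n k j s)
          + ∑' k, ∫⁻ s in Set.Ioc (0:ℝ) t,
              ENNReal.ofReal (Real.exp ((R i i - γ) * (t - s)) * (if k = i then 0 else R i k)) *
                QnAux R A γ n k j s := by
      rw [← ENNReal.tsum_add]
      simp only [QnAux]
      apply tsum_congr
      intro k
      rw [← lintegral_add_left (measurable_coef _ _ _ _ (measQ n k j))]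
      apply lintegral_congr
      intro s
      rw [← add_mul, ← ENNReal.ofReal_add (mul_nonneg (Real.exp_nonneg _) (ha' i k))
        (mul_nonneg (Real.exp_nonneg _) (hb k)), ← mul_add]
    -- Step 2 : the first sum is the p = n term
    have hT1 : (∑' k, ∫⁻ s in Set.Ioc (0:ℝ) t,
          ENNReal.ofReal (Real.exp ((R i i - γ) * (t - s)) * (A i k + if i = k then γ else 0)) *
            QnAux R A γ n k j s)
        = ∑' l, ∑' k, ∫⁻ s in Set.Ioc (0:ℝ) t,
            ENNReal.ofReal (Real.exp (-γ * (t - s))) * RnAux R 0 i l (t - s) *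
              ENNReal.ofReal (A l k + if l = k then γ else 0) * QnAux R A γ n k j s := by
      symm
      have hz : ∀ l : ℕ, l ≠ i →
          (∑' k, ∫⁻ s in Set.Ioc (0:ℝ) t,
            ENNReal.ofReal (Real.exp (-γ * (t - s))) * RnAux R 0 i l (t - s) *
              ENNReal.ofReal (A l k + if l = k then γ else 0) * QnAux R A γ n k j s) = 0 := by
        intro l hl
        have h0 : ∀ s : ℝ, RnAux R 0 i l s = 0 := by
          intro s
          simp only [RnAux]
          rw [if_neg (fun h => hl h.symm)]
        simp [h0]
      rw [tsum_eq_single i hz]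
      apply tsum_congr
      intro k
      apply lintegral_congr
      intro s
      have h0 : RnAux R 0 i i (t - s) = ENNReal.ofReal (Real.exp (R i i * (t - s))) := by
        simp [RnAux]
      rw [h0]
      have h1 : ENNReal.ofReal (Real.exp (-γ * (t - s))) *
            ENNReal.ofReal (Real.exp (R i i * (t - s))) *
            ENNReal.ofReal (A i k + if i = k then γ else 0)
          = ENNReal.ofReal (Real.exp ((R i i - γ) * (t - s)) *
              (A i k + if i = k then γ else 0)) := by
        rw [← ENNReal.ofReal_mul (Real.exp_nonneg _), ← Real.exp_add,
          ← ENNReal.ofReal_mul (Real.exp_nonneg _)]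
        have harg : -γ * (t - s) + R i i * (t - s) = (R i i - γ) * (t - s) := by ring
        rw [harg]
      rw [h1]
    -- Step 3 : substitute the induction hypothesis in the second sum
    have hT2k : ∀ k : ℕ, (∫⁻ s in Set.Ioc (0:ℝ) t,
          ENNReal.ofReal (Real.exp ((R i i - γ) * (t - s)) * (if k = i then 0 else R i k)) *
            QnAux R A γ n k j s)
        = (∑ p ∈ Finset.range n, ∫⁻ s in Set.Ioc (0:ℝ) t,
            ENNReal.ofReal (Real.exp ((R i i - γ) * (t - s)) * (if k = i then 0 else R i k)) *
              (∑' l, ∑' m, ∫⁻ u in Set.Ioc (0:ℝ) s,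
                ENNReal.ofReal (Real.exp (-γ * (s - u))) * RnAux R (n - p - 1) k l (s - u) *
                  ENNReal.ofReal (A l m + if l = m then γ else 0) * QnAux R A γ p m j u))
          + ∫⁻ s in Set.Ioc (0:ℝ) t,
              ENNReal.ofReal (Real.exp ((R i i - γ) * (t - s)) * (if k = i then 0 else R i k)) *
                (RnAux R n k j s * ENNReal.ofReal (Real.exp (-γ * s))) := by
      intro k
      have measW : ∀ p : ℕ, Measurable fun s : ℝ => ∑' l, ∑' m, ∫⁻ u in Set.Ioc (0:ℝ) s,
          ENNReal.ofReal (Real.exp (-γ * (s - u))) * RnAux R (n - p - 1) k l (s - u) *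
            ENNReal.ofReal (A l m + if l = m then γ else 0) * QnAux R A γ p m j u := by
        intro p
        apply Measurable.ennreal_tsum
        intro l
        apply Measurable.ennreal_tsum
        intro m
        apply measurable_lintegral_Ioc_param
        exact (((ENNReal.measurable_ofReal.comp (Real.measurable_exp.comp
          ((measurable_fst.sub measurable_snd).const_mul (-γ)))).mul
          ((measR _ k l).comp (measurable_fst.sub measurable_snd))).mul_const _).mul
          ((measQ p m j).comp measurable_snd)
      calc (∫⁻ s in Set.Ioc (0:ℝ) t,
          ENNReal.ofReal (Real.exp ((R i i - γ) * (t - s)) * (if k = i then 0 else R i k)) *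
            QnAux R A γ n k j s)
          = ∫⁻ s in Set.Ioc (0:ℝ) t,
            ((∑ p ∈ Finset.range n,
              ENNReal.ofReal (Real.exp ((R i i - γ) * (t - s)) * (if k = i then 0 else R i k)) *
                (∑' l, ∑' m, ∫⁻ u in Set.Ioc (0:ℝ) s,
                  ENNReal.ofReal (Real.exp (-γ * (s - u))) * RnAux R (n - p - 1) k l (s - u) *
                    ENNReal.ofReal (A l m + if l = m then γ else 0) * QnAux R A γ p m j u))
            + ENNReal.ofReal (Real.exp ((R i i - γ) * (t - s)) * (if k = i then 0 else R i k)) *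
                (RnAux R n k j s * ENNReal.ofReal (Real.exp (-γ * s)))) := by
            apply setLIntegral_congr_fun measurableSet_Ioc
            intro s hs
            beta_reduce
            rw [ih k j s hs.1.le, mul_add, Finset.mul_sum]
        _ = _ := by
            have hlast : Measurable fun s : ℝ =>
                ENNReal.ofReal (Real.exp ((R i i - γ) * (t - s)) * (if k = i then 0 else R i k)) *
                  (RnAux R n k j s * ENNReal.ofReal (Real.exp (-γ * s))) := by
              apply measurable_coef
              apply Measurable.mul (measR n k j)
              exact ENNReal.measurable_ofReal.comp (Real.measurable_exp.comp
                (measurable_id.const_mul (-γ)))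
            rw [lintegral_add_right _ hlast,
              lintegral_finset_sum _ (fun p _ => measurable_coef _ _ _ _ (measW p))]
    have hT2 : (∑' k, ∫⁻ s in Set.Ioc (0:ℝ) t,
          ENNReal.ofReal (Real.exp ((R i i - γ) * (t - s)) * (if k = i then 0 else R i k)) *
            QnAux R A γ n k j s)
        = (∑ p ∈ Finset.range n, ∑' k, ∫⁻ s in Set.Ioc (0:ℝ) t,
            ENNReal.ofReal (Real.exp ((R i i - γ) * (t - s)) * (if k = i then 0 else R i k)) *
              (∑' l, ∑' m, ∫⁻ u in Set.Ioc (0:ℝ) s,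
                ENNReal.ofReal (Real.exp (-γ * (s - u))) * RnAux R (n - p - 1) k l (s - u) *
                  ENNReal.ofReal (A l m + if l = m then γ else 0) * QnAux R A γ p m j u))
          + ∑' k, ∫⁻ s in Set.Ioc (0:ℝ) t,
              ENNReal.ofReal (Real.exp ((R i i - γ) * (t - s)) * (if k = i then 0 else R i k)) *
                (RnAux R n k j s * ENNReal.ofReal (Real.exp (-γ * s))) := by
      calc (∑' k, ∫⁻ s in Set.Ioc (0:ℝ) t,
          ENNReal.ofReal (Real.exp ((R i i - γ) * (t - s)) * (if k = i then 0 else R i k)) *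
            QnAux R A γ n k j s) = ∑' k, _ := tsum_congr hT2k
        _ = _ := by
            rw [ENNReal.tsum_add, Summable.tsum_finsetSum (fun p _ => ENNReal.summable)]
    -- Step 4 : the last term gives RnAux (n+1) * e^{-γ t}
    have hY : (∑' k, ∫⁻ s in Set.Ioc (0:ℝ) t,
          ENNReal.ofReal (Real.exp ((R i i - γ) * (t - s)) * (if k = i then 0 else R i k)) *
            (RnAux R n k j s * ENNReal.ofReal (Real.exp (-γ * s))))
        = RnAux R (n+1) i j t * ENNReal.ofReal (Real.exp (-γ * t)) := by
      have hpt : ∀ (k : ℕ) (s : ℝ),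
          ENNReal.ofReal (Real.exp ((R i i - γ) * (t - s)) * (if k = i then 0 else R i k)) *
            (RnAux R n k j s * ENNReal.ofReal (Real.exp (-γ * s)))
          = ENNReal.ofReal (Real.exp (-γ * t)) *
            (ENNReal.ofReal (Real.exp (R i i * (t - s)) * (if k = i then 0 else R i k)) *
              RnAux R n k j s) := by
        intro k s
        have harg : Real.exp (-γ * s) *
              (Real.exp ((R i i - γ) * (t - s)) * (if k = i then 0 else R i k))
            = Real.exp (-γ * t) * (Real.exp (R i i * (t - s)) * (if k = i then 0 else R i k)) := by
          rw [← mul_assoc, ← Real.exp_add, ← mul_assoc, ← Real.exp_add]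
          have h2 : -γ * s + (R i i - γ) * (t - s) = -γ * t + R i i * (t - s) := by ring
          rw [h2]
        calc ENNReal.ofReal (Real.exp ((R i i - γ) * (t - s)) * (if k = i then 0 else R i k)) *
              (RnAux R n k j s * ENNReal.ofReal (Real.exp (-γ * s)))
            = ENNReal.ofReal (Real.exp (-γ * s)) *
                ENNReal.ofReal (Real.exp ((R i i - γ) * (t - s)) * (if k = i then 0 else R i k)) *
                RnAux R n k j s := by ring
          _ = ENNReal.ofReal (Real.exp (-γ * s) *
                (Real.exp ((R i i - γ) * (t - s)) * (if k = i then 0 else R i k))) *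
                RnAux R n k j s := by
              conv_rhs => rw [ENNReal.ofReal_mul (Real.exp_nonneg _)]
          _ = ENNReal.ofReal (Real.exp (-γ * t) *
                (Real.exp (R i i * (t - s)) * (if k = i then 0 else R i k))) *
                RnAux R n k j s := by rw [harg]
          _ = _ := by
              rw [ENNReal.ofReal_mul (Real.exp_nonneg _), mul_assoc]
      simp only [hpt]
      have hc : ∀ k : ℕ, (∫⁻ s in Set.Ioc (0:ℝ) t, ENNReal.ofReal (Real.exp (-γ * t)) *
            (ENNReal.ofReal (Real.exp (R i i * (t - s)) * (if k = i then 0 else R i k)) *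
              RnAux R n k j s))
          = ENNReal.ofReal (Real.exp (-γ * t)) *
            ∫⁻ s in Set.Ioc (0:ℝ) t,
              ENNReal.ofReal (Real.exp (R i i * (t - s)) * (if k = i then 0 else R i k)) *
                RnAux R n k j s :=
        fun k => lintegral_const_mul' _ _ ofReal_ne_top
      simp only [hc]
      rw [ENNReal.tsum_mul_left, mul_comm]
      congr 1
      simp only [RnAux]
      apply tsum_congr
      intro k
      by_cases hk : k = i
      · simp [hk]
      · simp only [if_neg hk]
    -- Step 5 : Fubini on each p < n term
    have hXp : ∀ p : ℕ, p < n →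
        (∑' k, ∫⁻ s in Set.Ioc (0:ℝ) t,
          ENNReal.ofReal (Real.exp ((R i i - γ) * (t - s)) * (if k = i then 0 else R i k)) *
            (∑' l, ∑' m, ∫⁻ u in Set.Ioc (0:ℝ) s,
              ENNReal.ofReal (Real.exp (-γ * (s - u))) * RnAux R (n - p - 1) k l (s - u) *
                ENNReal.ofReal (A l m + if l = m then γ else 0) * QnAux R A γ p m j u))
        = ∑' l, ∑' m, ∫⁻ u in Set.Ioc (0:ℝ) t,
            ENNReal.ofReal (Real.exp (-γ * (t - u))) * RnAux R (n - p) i l (t - u) *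
              ENNReal.ofReal (A l m + if l = m then γ else 0) * QnAux R A γ p m j u := by
      intro p hp
      obtain ⟨q, hq2⟩ : ∃ q, n - p = q + 1 := ⟨n - p - 1, by omega⟩
      have hq1 : n - p - 1 = q := by omega
      rw [hq1, hq2]
      have hI : ∀ k l m : ℕ, Measurable fun s : ℝ => ∫⁻ u in Set.Ioc (0:ℝ) s,
          ENNReal.ofReal (Real.exp (-γ * (s - u))) * RnAux R q k l (s - u) *
            ENNReal.ofReal (A l m + if l = m then γ else 0) * QnAux R A γ p m j u := by
        intro k l m
        apply measurable_lintegral_Ioc_param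
        exact (((ENNReal.measurable_ofReal.comp (Real.measurable_exp.comp
          ((measurable_fst.sub measurable_snd).const_mul (-γ)))).mul
          ((measR q k l).comp (measurable_fst.sub measurable_snd))).mul_const _).mul
          ((measQ p m j).comp measurable_snd)
      have hAB : ∀ k : ℕ, (∫⁻ s in Set.Ioc (0:ℝ) t,
          ENNReal.ofReal (Real.exp ((R i i - γ) * (t - s)) * (if k = i then 0 else R i k)) *
            (∑' l, ∑' m, ∫⁻ u in Set.Ioc (0:ℝ) s,
              ENNReal.ofReal (Real.exp (-γ * (s - u))) * RnAux R q k l (s - u) *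
                ENNReal.ofReal (A l m + if l = m then γ else 0) * QnAux R A γ p m j u))
          = ∑' l, ∑' m, ∫⁻ s in Set.Ioc (0:ℝ) t,
              ENNReal.ofReal (Real.exp ((R i i - γ) * (t - s)) * (if k = i then 0 else R i k)) *
                ∫⁻ u in Set.Ioc (0:ℝ) s,
                  ENNReal.ofReal (Real.exp (-γ * (s - u))) * RnAux R q k l (s - u) *
                    ENNReal.ofReal (A l m + if l = m then γ else 0) * QnAux R A γ p m j u := by
        intro k
        have h1 : ∀ s : ℝ,
            ENNReal.ofReal (Real.exp ((R i i - γ) * (t - s)) * (if k = i then 0 else R i k)) *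
              (∑' l, ∑' m, ∫⁻ u in Set.Ioc (0:ℝ) s,
                ENNReal.ofReal (Real.exp (-γ * (s - u))) * RnAux R q k l (s - u) *
                  ENNReal.ofReal (A l m + if l = m then γ else 0) * QnAux R A γ p m j u)
            = ∑' l, ∑' m,
                ENNReal.ofReal (Real.exp ((R i i - γ) * (t - s)) * (if k = i then 0 else R i k)) *
                  ∫⁻ u in Set.Ioc (0:ℝ) s,
                    ENNReal.ofReal (Real.exp (-γ * (s - u))) * RnAux R q k l (s - u) *
                      ENNReal.ofReal (A l m + if l = m then γ else 0) * QnAux R A γ p m j u := by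
          intro s
          rw [← ENNReal.tsum_mul_left]
          exact tsum_congr fun l => (ENNReal.tsum_mul_left).symm
        rw [lintegral_congr h1,
          lintegral_tsum (fun l => (Measurable.ennreal_tsum
            (fun m => measurable_coef _ _ _ _ (hI k l m))).aemeasurable)]
        exact tsum_congr fun l =>
          lintegral_tsum (fun m => (measurable_coef _ _ _ _ (hI k l m)).aemeasurable)
      have core : ∀ k l m : ℕ, k ≠ i →
          (∫⁻ s in Set.Ioc (0:ℝ) t,
            ENNReal.ofReal (Real.exp ((R i i - γ) * (t - s)) * R i k) *
              ∫⁻ u in Set.Ioc (0:ℝ) s,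
                ENNReal.ofReal (Real.exp (-γ * (s - u))) * RnAux R q k l (s - u) *
                  ENNReal.ofReal (A l m + if l = m then γ else 0) * QnAux R A γ p m j u)
          = ∫⁻ u in Set.Ioc (0:ℝ) t, ENNReal.ofReal (Real.exp (-γ * (t - u))) *
              (∫⁻ y in Set.Ioc (0:ℝ) (t - u),
                ENNReal.ofReal (Real.exp (R i i * ((t - u) - y)) * R i k) * RnAux R q k l y) *
              (ENNReal.ofReal (A l m + if l = m then γ else 0) * QnAux R A γ p m j u) := by
        intro k l m hk
        have base := fubini_core (R i i) γ (R i k) t (RnAux R q k l)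
          (fun u => ENNReal.ofReal (A l m + if l = m then γ else 0) * QnAux R A γ p m j u)
          (measR q k l) (measurable_const.mul (measQ p m j))
        refine Eq.trans ?_ base
        apply lintegral_congr
        intro s
        congr 1
        apply lintegral_congr
        intro u
        ring
      have hD : ∀ l m : ℕ,
          (∫⁻ u in Set.Ioc (0:ℝ) t,
            ENNReal.ofReal (Real.exp (-γ * (t - u))) * RnAux R (q+1) i l (t - u) *
              ENNReal.ofReal (A l m + if l = m then γ else 0) * QnAux R A γ p m j u)
          = ∑' k, ∫⁻ u in Set.Ioc (0:ℝ) t,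
              ENNReal.ofReal (Real.exp (-γ * (t - u))) *
                (if k = i then 0 else ∫⁻ y in Set.Ioc (0:ℝ) (t - u),
                  ENNReal.ofReal (Real.exp (R i i * ((t - u) - y)) * R i k) * RnAux R q k l y) *
                ENNReal.ofReal (A l m + if l = m then γ else 0) * QnAux R A γ p m j u := by
        intro l m
        have h1 : ∀ u : ℝ,
            ENNReal.ofReal (Real.exp (-γ * (t - u))) * RnAux R (q+1) i l (t - u) *
              ENNReal.ofReal (A l m + if l = m then γ else 0) * QnAux R A γ p m j u
            = ∑' k, ENNReal.ofReal (Real.exp (-γ * (t - u))) *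
                (if k = i then 0 else ∫⁻ y in Set.Ioc (0:ℝ) (t - u),
                  ENNReal.ofReal (Real.exp (R i i * ((t - u) - y)) * R i k) * RnAux R q k l y) *
                ENNReal.ofReal (A l m + if l = m then γ else 0) * QnAux R A γ p m j u := by
          intro u
          rw [show RnAux R (q+1) i l (t-u) = ∑' k, if k = i then 0 else
              ∫⁻ y in Set.Ioc (0:ℝ) (t-u),
                ENNReal.ofReal (Real.exp (R i i * ((t-u) - y)) * R i k) * RnAux R q k l y
            from by simp only [RnAux]]
          rw [← ENNReal.tsum_mul_left, ← ENNReal.tsum_mul_right, ← ENNReal.tsum_mul_right]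
        rw [lintegral_congr h1]
        apply lintegral_tsum
        intro k
        apply Measurable.aemeasurable
        apply Measurable.mul
        apply Measurable.mul
        apply Measurable.mul
        · exact ENNReal.measurable_ofReal.comp (Real.measurable_exp.comp
            ((measurable_const.sub measurable_id).const_mul (-γ)))
        · by_cases hk : k = i
          · simp only [if_pos hk]
            exact measurable_const
          · simp only [if_neg hk]
            exact (measurable_conv (R i i) (R i k) (RnAux R q k l)).comp
              (measurable_const.sub measurable_id)
        · exact measurable_const
        · exact measQ p m j
      calc (∑' k, ∫⁻ s in Set.Ioc (0:ℝ) t,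
          ENNReal.ofReal (Real.exp ((R i i - γ) * (t - s)) * (if k = i then 0 else R i k)) *
            (∑' l, ∑' m, ∫⁻ u in Set.Ioc (0:ℝ) s,
              ENNReal.ofReal (Real.exp (-γ * (s - u))) * RnAux R q k l (s - u) *
                ENNReal.ofReal (A l m + if l = m then γ else 0) * QnAux R A γ p m j u))
          = ∑' k, ∑' l, ∑' m, ∫⁻ s in Set.Ioc (0:ℝ) t,
              ENNReal.ofReal (Real.exp ((R i i - γ) * (t - s)) * (if k = i then 0 else R i k)) *
                ∫⁻ u in Set.Ioc (0:ℝ) s,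
                  ENNReal.ofReal (Real.exp (-γ * (s - u))) * RnAux R q k l (s - u) *
                    ENNReal.ofReal (A l m + if l = m then γ else 0) * QnAux R A γ p m j u :=
            tsum_congr hAB
        _ = ∑' l, ∑' k, ∑' m, ∫⁻ s in Set.Ioc (0:ℝ) t,
              ENNReal.ofReal (Real.exp ((R i i - γ) * (t - s)) * (if k = i then 0 else R i k)) *
                ∫⁻ u in Set.Ioc (0:ℝ) s,
                  ENNReal.ofReal (Real.exp (-γ * (s - u))) * RnAux R q k l (s - u) *
                    ENNReal.ofReal (A l m + if l = m then γ else 0) * QnAux R A γ p m j u :=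
            ENNReal.tsum_comm
        _ = ∑' l, ∑' m, ∑' k, ∫⁻ s in Set.Ioc (0:ℝ) t,
              ENNReal.ofReal (Real.exp ((R i i - γ) * (t - s)) * (if k = i then 0 else R i k)) *
                ∫⁻ u in Set.Ioc (0:ℝ) s,
                  ENNReal.ofReal (Real.exp (-γ * (s - u))) * RnAux R q k l (s - u) *
                    ENNReal.ofReal (A l m + if l = m then γ else 0) * QnAux R A γ p m j u :=
            tsum_congr fun l => ENNReal.tsum_comm
        _ = ∑' l, ∑' m, ∫⁻ u in Set.Ioc (0:ℝ) t,
              ENNReal.ofReal (Real.exp (-γ * (t - u))) * RnAux R (q+1) i l (t - u) *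
                ENNReal.ofReal (A l m + if l = m then γ else 0) * QnAux R A γ p m j u := by
            apply tsum_congr
            intro l
            apply tsum_congr
            intro m
            rw [hD l m]
            apply tsum_congr
            intro k
            by_cases hk : k = i
            · simp [hk]
            · simp only [if_neg hk]
              rw [core k l m hk]
              apply lintegral_congr
              intro u
              ring
    -- Assembly
    rw [hsplit, hT1, hT2, hY,
      Finset.sum_congr rfl (fun p hp => hXp p (Finset.mem_range.mp hp))]
    rw [Finset.sum_range_succ]
    have hidx : ∀ p : ℕ, n + 1 - p - 1 = n - p := fun p => by omega
    simp only [hidx, Nat.sub_self]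
    ring

/-- identity relating the successive approximations `Q^(n)` of the
perturbed matrix `Q = R + A` (with `q'_{ik} = a'_{ik} + (1-δ_{ik}) r_{ik}`,
`a'_{ij} = a_{ij} + γ δ_{ij}`, `γ = sup_i a_i`) to those of `R`:
`Q^(n)_ij(t) = Σ_{p<n} Σ_{l,k} ∫_0^t e^{-γ(t-s)} R^(n-p-1)_il(t-s) a'_lk Q^(p)_kj(s) ds
               + R^(n)_ij(t) e^{-γ t}`.
Here `r_i = -R i i`, `a_i = -A i i`, so `e^{-r_i t} = exp (R i i * t)` and
`e^{-(r_i+γ)t} = exp ((R i i - γ) * t)`. -/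
theorem successive_approximation_perturbation
    (R A : ℕ → ℕ → ℝ) (γ : ℝ)
    (hRpos : ∀ i j, i ≠ j → 0 ≤ R i j)
    (hRstable : ∀ i, Summable (R i))
    (hRcons : ∀ i, ∑' j, R i j = 0)
    (hApos : ∀ i j, i ≠ j → 0 ≤ A i j)
    (hAstable : ∀ i, Summable (A i))
    (hAcons : ∀ i, ∑' j, A i j = 0)
    (hbdd : BddAbove (Set.range fun i => -A i i))
    (hγ : γ = ⨆ i, -A i i)
    (Rn Qn : ℕ → ℕ → ℕ → ℝ → ℝ≥0∞)
    (hRn0 : ∀ i j t, 0 ≤ t → Rn 0 i j t =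
      if i = j then ENNReal.ofReal (Real.exp (R i i * t)) else 0)
    (hRnrec : ∀ n i j t, 0 ≤ t → Rn (n + 1) i j t =
      ∑' k, if k = i then 0 else
        ∫⁻ s in Set.Ioc (0 : ℝ) t,
          ENNReal.ofReal (Real.exp (R i i * (t - s)) * R i k) * Rn n k j s)
    (hQn0 : ∀ i j t, 0 ≤ t → Qn 0 i j t =
      if i = j then ENNReal.ofReal (Real.exp ((R i i - γ) * t)) else 0)
    (hQnrec : ∀ n i j t, 0 ≤ t → Qn (n + 1) i j t =
      ∑' k, ∫⁻ s in Set.Ioc (0 : ℝ) t,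
        ENNReal.ofReal (Real.exp ((R i i - γ) * (t - s)) *
          ((A i k + if i = k then γ else 0) + if k = i then 0 else R i k)) * Qn n k j s) :
    ∀ n i j t, 0 ≤ t →
      Qn n i j t =
        (∑ p ∈ Finset.range n, ∑' l, ∑' k,
          ∫⁻ s in Set.Ioc (0 : ℝ) t,
            ENNReal.ofReal (Real.exp (-γ * (t - s))) * Rn (n - p - 1) i l (t - s) *
              ENNReal.ofReal (A l k + if l = k then γ else 0) * Qn p k j s)
        + Rn n i j t * ENNReal.ofReal (Real.exp (-γ * t)) := by
  have ha' : ∀ l k, 0 ≤ A l k + if l = k then γ else 0 := by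
    intro l k
    by_cases h : l = k
    · subst h
      rw [if_pos rfl]
      have h1 : -A l l ≤ ⨆ i, -A i i := le_ciSup hbdd l
      rw [← hγ] at h1
      linarith
    · simp only [if_neg h, add_zero]
      exact hApos l k h
  have hRe := Rn_eq R Rn hRn0 hRnrec
  have hQe := Qn_eq R A γ Qn hQn0 hQnrec
  intro n i j t ht
  rw [hQe n i j t ht, hRe n i j t ht, main_aux R A γ hRpos ha' n i j t ht]
  congr 1
  apply Finset.sum_congr rfl
  intro p hp
  apply tsum_congr
  intro l
  apply tsum_congr
  intro k
  apply setLIntegral_congr_fun measurableSet_Ioc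
  intro s hs
  beta_reduce
  rw [hRe (n - p - 1) i l (t - s) (sub_nonneg.mpr hs.2), hQe p k j s hs.1.le]
end

section
/- Let R be a stable conservative Q-matrix on ℕ with Feller minimal transition function R(t), let A be a bounded stable conservative Q-matrix with γ = sup_i a_i < ∞, and set Q = R + A with Feller minimal transition function Q(t), a'_ij = a_ij + γ δ_ij. Then Q_ij(t) satisfies the equation Q_ij(t) = Σ_{l,k} ∫_0^t e^{-γ(t−s)} R_il(t−s) a'_lk Q_kj(s) ds + R_ij(t) e^{-γ t}. -/
open MeasureTheory ENNReal

namespace MTPEaux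

noncomputable def ker (c : ℝ) (b : ℕ → ℝ) (g : ℕ → ℝ → ℝ≥0∞) (t : ℝ) : ℝ≥0∞ :=
  ∑' k, ∫⁻ s in Set.Ioc (0:ℝ) t, ENNReal.ofReal (Real.exp (c*(t-s)) * b k) * g k s

lemma ker_neg {c : ℝ} {b : ℕ → ℝ} {g : ℕ → ℝ → ℝ≥0∞} {t : ℝ} (ht : t ≤ 0) :
    ker c b g t = 0 := by
  simp [ker, Set.Ioc_eq_empty (not_lt.2 ht)]

lemma measurable_exp_factor (c : ℝ) (t : ℝ) :
    Measurable fun s : ℝ => ENNReal.ofReal (Real.exp (c*(t-s))) :=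
  (Real.continuous_exp.comp (continuous_const.mul (continuous_const.sub continuous_id))).measurable.ennreal_ofReal

lemma measurable_wfactor (c : ℝ) (t : ℝ) (b : ℝ) :
    Measurable fun s : ℝ => ENNReal.ofReal (Real.exp (c*(t-s)) * b) :=
  ((Real.continuous_exp.comp (continuous_const.mul (continuous_const.sub continuous_id))).mul
    continuous_const).measurable.ennreal_ofReal

lemma measurable_ker {c : ℝ} {b : ℕ → ℝ} (hb : ∀ k, 0 ≤ b k) (g : ℕ → ℝ → ℝ≥0∞) :
    Measurable (ker c b g) := by
  have key : ∀ t, ker c b g t = ENNReal.ofReal (Real.exp (c*t)) *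
      ∑' k, ∫⁻ s in Set.Ioc (0:ℝ) t, ENNReal.ofReal (Real.exp (-(c*s)) * b k) * g k s := by
    intro t
    rw [ker, ← ENNReal.tsum_mul_left]
    refine tsum_congr fun k => ?_
    rw [← lintegral_const_mul' _ _ ENNReal.ofReal_ne_top]
    refine lintegral_congr fun s => ?_
    rw [← mul_assoc, ← ENNReal.ofReal_mul (Real.exp_nonneg _)]
    congr 2
    rw [← mul_assoc, ← Real.exp_add]
    ring_nf
  have : (ker c b g) = fun t => ENNReal.ofReal (Real.exp (c*t)) *
      ∑' k, ∫⁻ s in Set.Ioc (0:ℝ) t, ENNReal.ofReal (Real.exp (-(c*s)) * b k) * g k s :=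
    funext key
  rw [this]
  refine Measurable.mul ?_ (Measurable.ennreal_tsum fun k => ?_)
  · exact (Real.continuous_exp.comp (continuous_const.mul continuous_id)).measurable.ennreal_ofReal
  · exact Monotone.measurable fun t₁ t₂ h =>
      lintegral_mono_set (Set.Ioc_subset_Ioc_right h)

lemma ker_add_b {c : ℝ} {b₁ b₂ : ℕ → ℝ} {g : ℕ → ℝ → ℝ≥0∞}
    (hb₁ : ∀ k, 0 ≤ b₁ k) (hb₂ : ∀ k, 0 ≤ b₂ k) (hg : ∀ k, Measurable (g k)) (t : ℝ) :
    ker c (fun k => b₁ k + b₂ k) g t = ker c b₁ g t + ker c b₂ g t := by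
  rw [ker, ker, ker, ← ENNReal.tsum_add]
  refine tsum_congr fun k => ?_
  have : ∫⁻ s in Set.Ioc (0:ℝ) t, ENNReal.ofReal (Real.exp (c*(t-s)) * (b₁ k + b₂ k)) * g k s
      = ∫⁻ s in Set.Ioc (0:ℝ) t, (ENNReal.ofReal (Real.exp (c*(t-s)) * b₁ k) * g k s
        + ENNReal.ofReal (Real.exp (c*(t-s)) * b₂ k) * g k s) := by
    refine lintegral_congr fun s => ?_
    rw [mul_add, ENNReal.ofReal_add (mul_nonneg (Real.exp_nonneg _) (hb₁ k))
      (mul_nonneg (Real.exp_nonneg _) (hb₂ k)), add_mul]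
  rw [this, lintegral_add_left (f := fun s => ENNReal.ofReal (Real.exp (c*(t-s)) * b₁ k) * g k s)
    ((measurable_wfactor c t (b₁ k)).mul (hg k))]

lemma ker_add_g {c : ℝ} {b : ℕ → ℝ} {g₁ g₂ : ℕ → ℝ → ℝ≥0∞}
    (hg₁ : ∀ k, Measurable (g₁ k)) (t : ℝ) :
    ker c b (fun k s => g₁ k s + g₂ k s) t = ker c b g₁ t + ker c b g₂ t := by
  rw [ker, ker, ker, ← ENNReal.tsum_add]
  refine tsum_congr fun k => ?_
  have : ∫⁻ s in Set.Ioc (0:ℝ) t, ENNReal.ofReal (Real.exp (c*(t-s)) * b k) * (g₁ k s + g₂ k s)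
      = ∫⁻ s in Set.Ioc (0:ℝ) t, (ENNReal.ofReal (Real.exp (c*(t-s)) * b k) * g₁ k s
        + ENNReal.ofReal (Real.exp (c*(t-s)) * b k) * g₂ k s) :=
    lintegral_congr fun s => mul_add _ _ _
  rw [this, lintegral_add_left (f := fun s => ENNReal.ofReal (Real.exp (c*(t-s)) * b k) * g₁ k s)
    ((measurable_wfactor c t (b k)).mul (hg₁ k))]

lemma ker_finsum {c : ℝ} {b : ℕ → ℝ} {ι : Type*} (F : Finset ι) (G : ι → ℕ → ℝ → ℝ≥0∞)
    (hG : ∀ n k, Measurable (G n k)) (t : ℝ) :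
    ker c b (fun k s => ∑ n ∈ F, G n k s) t = ∑ n ∈ F, ker c b (G n) t := by
  classical
  induction F using Finset.induction_on with
  | empty => simp [ker]
  | insert x F' hx ih =>
    have : (fun k s => ∑ n ∈ insert x F', G n k s)
        = fun k s => G x k s + ∑ n ∈ F', G n k s := by
      funext k s; rw [Finset.sum_insert hx]
    rw [this, ker_add_g (fun k => hG x k) t, ih, Finset.sum_insert hx]

lemma ker_tsum {c : ℝ} {b : ℕ → ℝ} {ι : Type*} [Countable ι] (G : ι → ℕ → ℝ → ℝ≥0∞)
    (hG : ∀ n k, Measurable (G n k)) (t : ℝ) :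
    ker c b (fun k s => ∑' n, G n k s) t = ∑' n, ker c b (G n) t := by
  rw [ker]
  have : ∀ k, ∫⁻ s in Set.Ioc (0:ℝ) t,
      ENNReal.ofReal (Real.exp (c*(t-s)) * b k) * ∑' n, G n k s
      = ∑' n, ∫⁻ s in Set.Ioc (0:ℝ) t,
        ENNReal.ofReal (Real.exp (c*(t-s)) * b k) * G n k s := by
    intro k
    rw [← lintegral_tsum (f := fun n s => ENNReal.ofReal (Real.exp (c*(t-s)) * b k) * G n k s)
      fun n => ((measurable_wfactor c t (b k)).mul (hG n k)).aemeasurable]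
    exact lintegral_congr fun s => ENNReal.tsum_mul_left.symm
  calc ∑' k, ∫⁻ s in Set.Ioc (0:ℝ) t,
        ENNReal.ofReal (Real.exp (c*(t-s)) * b k) * ∑' n, G n k s
      = ∑' k, ∑' n, ∫⁻ s in Set.Ioc (0:ℝ) t,
        ENNReal.ofReal (Real.exp (c*(t-s)) * b k) * G n k s := tsum_congr this
    _ = ∑' n, ker c b (G n) t := by rw [ENNReal.tsum_comm]; rfl

lemma ker_congr {c : ℝ} {b : ℕ → ℝ} {g₁ g₂ : ℕ → ℝ → ℝ≥0∞}
    (h : ∀ k s, 0 < s → g₁ k s = g₂ k s) (t : ℝ) :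
    ker c b g₁ t = ker c b g₂ t := by
  refine tsum_congr fun k => setLIntegral_congr_fun measurableSet_Ioc
    (fun s hs => by rw [h k s hs.1])

lemma meas_conv {F h : ℝ → ℝ≥0∞} (hF : Measurable F) (hh : Measurable h) :
    Measurable fun u => ∫⁻ s in Set.Ioc (0:ℝ) u, F (u - s) * h s := by
  have key : ∀ u, ∫⁻ s in Set.Ioc (0:ℝ) u, F (u - s) * h s
      = ∫⁻ s, (fun p : ℝ × ℝ => if 0 < p.2 ∧ p.2 ≤ p.1 then F (p.1 - p.2) * h p.2 else 0) (u, s) := by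
    intro u
    rw [← lintegral_indicator measurableSet_Ioc]
    exact lintegral_congr fun s => by simp [Set.indicator_apply, Set.mem_Ioc]
  have hm : Measurable fun p : ℝ × ℝ =>
      if 0 < p.2 ∧ p.2 ≤ p.1 then F (p.1 - p.2) * h p.2 else 0 := by
    refine Measurable.ite ?_ ((hF.comp (measurable_fst.sub measurable_snd)).mul
      (hh.comp measurable_snd)) measurable_const
    exact (measurableSet_lt measurable_const measurable_snd).inter
      (measurableSet_le measurable_snd measurable_fst)
  have : (fun u => ∫⁻ s in Set.Ioc (0:ℝ) u, F (u - s) * h s)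
      = fun u => ∫⁻ s, (fun p : ℝ × ℝ =>
          if 0 < p.2 ∧ p.2 ≤ p.1 then F (p.1 - p.2) * h p.2 else 0) (u, s) ∂(volume : Measure ℝ) :=
    funext key
  rw [this]
  exact hm.lintegral_prod_right'

lemma measurable_w (c : ℝ) (bk : ℝ) :
    Measurable fun τ : ℝ => ENNReal.ofReal (Real.exp (c*τ) * bk) :=
  ((Real.continuous_exp.comp (continuous_const.mul continuous_id)).mul
    continuous_const).measurable.ennreal_ofReal

lemma ker_conv {c : ℝ} {b : ℕ → ℝ} (F : ℕ → ℝ → ℝ≥0∞) (h : ℝ → ℝ≥0∞)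
    (hF : ∀ k, Measurable (F k)) (hh : Measurable h) (t : ℝ) :
    ker c b (fun k u => ∫⁻ s in Set.Ioc (0:ℝ) u, F k (u - s) * h s) t
      = ∫⁻ s in Set.Ioc (0:ℝ) t, ker c b F (t - s) * h s := by
  set w : ℕ → ℝ → ℝ≥0∞ := fun k τ => ENNReal.ofReal (Real.exp (c*τ) * b k) with hw
  have hwm : ∀ k, Measurable (w k) := fun k => measurable_w c (b k)
  have hk : ∀ k,
      (∫⁻ u in Set.Ioc (0:ℝ) t, w k (t-u) * ∫⁻ s in Set.Ioc (0:ℝ) u, F k (u-s) * h s)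
      = ∫⁻ s in Set.Ioc (0:ℝ) t,
          (∫⁻ v in Set.Ioc (0:ℝ) (t-s), w k ((t-s)-v) * F k v) * h s := by
    intro k
    set f : ℝ → ℝ → ℝ≥0∞ := fun u s =>
      if (0 < u ∧ u ≤ t) ∧ 0 < s ∧ s ≤ u then w k (t-u) * (F k (u-s) * h s) else 0 with hf
    have claimA : (∫⁻ u in Set.Ioc (0:ℝ) t, w k (t-u) * ∫⁻ s in Set.Ioc (0:ℝ) u, F k (u-s) * h s)
        = ∫⁻ u, ∫⁻ s, f u s := by
      rw [← lintegral_indicator measurableSet_Ioc]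
      refine lintegral_congr fun u => ?_
      by_cases hu : u ∈ Set.Ioc (0:ℝ) t
      · rw [Set.indicator_of_mem hu, ← lintegral_indicator measurableSet_Ioc,
          ← lintegral_const_mul' _ _ ENNReal.ofReal_ne_top]
        refine lintegral_congr fun s => ?_
        rw [Set.mem_Ioc] at hu
        by_cases hs : s ∈ Set.Ioc (0:ℝ) u
        · rw [Set.mem_Ioc] at hs
          rw [Set.indicator_of_mem (Set.mem_Ioc.2 hs), hf]
          simp only [if_pos (And.intro hu hs)]
          rfl
        · rw [Set.indicator_of_notMem hs, hf, mul_zero]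
          rw [Set.mem_Ioc] at hs
          exact (if_neg fun hc => hs hc.2).symm
      · rw [Set.indicator_of_notMem hu]
        rw [Set.mem_Ioc] at hu
        have : ∀ s, f u s = 0 := fun s => if_neg fun hc => hu hc.1
        simp [this]
    have hfmeas : Measurable (Function.uncurry f) := by
      have : Function.uncurry f = fun p : ℝ × ℝ =>
          if (0 < p.1 ∧ p.1 ≤ t) ∧ 0 < p.2 ∧ p.2 ≤ p.1 then
            w k (t-p.1) * (F k (p.1-p.2) * h p.2) else 0 := rfl
      rw [this]
      refine Measurable.ite ?_ ?_ measurable_const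
      · refine MeasurableSet.inter ?_ ?_
        · exact ((measurableSet_lt measurable_const measurable_fst).inter
            (measurableSet_le measurable_fst measurable_const))
        · exact ((measurableSet_lt measurable_const measurable_snd).inter
            (measurableSet_le measurable_snd measurable_fst))
      · exact ((hwm k).comp (measurable_const.sub measurable_fst)).mul
          (((hF k).comp (measurable_fst.sub measurable_snd)).mul (hh.comp measurable_snd))
    have claimB : (∫⁻ u, ∫⁻ s, f u s) = ∫⁻ s, ∫⁻ u, f u s :=
      lintegral_lintegral_swap hfmeas.aemeasurable
    have claimC : ∀ s, (∫⁻ u, f u s) = (Set.Ioc (0:ℝ) t).indicator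
        (fun s => (∫⁻ v in Set.Ioc (0:ℝ) (t-s), w k ((t-s)-v) * F k v) * h s) s := by
      intro s
      by_cases hs : 0 < s ∧ s ≤ t
      · rw [Set.indicator_of_mem (Set.mem_Ioc.2 hs)]
        have hstep : ∀ u, f u s =
            (fun u => if s ≤ u ∧ u ≤ t then w k (t-u) * F k (u-s) else 0) u * h s := by
          intro u
          by_cases hu : s ≤ u ∧ u ≤ t
          · rw [hf]
            simp only [if_pos hu, if_pos (And.intro (And.intro (lt_of_lt_of_le hs.1 hu.1) hu.2)
              (And.intro hs.1 hu.1))]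
            ring
          · rw [hf]
            simp only [if_neg hu]
            rw [if_neg ?_, zero_mul]
            rintro ⟨h1, h2⟩; exact hu ⟨h2.2, h1.2⟩
        rw [lintegral_congr hstep]
        have hitem : Measurable fun u => if s ≤ u ∧ u ≤ t then w k (t-u) * F k (u-s) else 0 := by
          refine Measurable.ite ?_ (((hwm k).comp (measurable_const.sub measurable_id)).mul
            ((hF k).comp (measurable_id.sub measurable_const))) measurable_const
          exact measurableSet_Icc
        rw [lintegral_mul_const _ hitem]
        congr 1
        have e0 : (fun u => if s ≤ u ∧ u ≤ t then w k (t-u) * F k (u-s) else 0)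
            = fun u => (Set.Icc s t).indicator (fun u => w k (t-u) * F k (u-s)) u := by
          funext u; simp [Set.indicator_apply, Set.mem_Icc]
        rw [e0, lintegral_indicator measurableSet_Icc,
          ← Measure.restrict_congr_set Ioc_ae_eq_Icc,
          ← lintegral_indicator measurableSet_Ioc,
          ← lintegral_add_right_eq_self
            (fun u => (Set.Ioc s t).indicator (fun u => w k (t-u) * F k (u-s)) u) s]
        rw [← lintegral_indicator measurableSet_Ioc]
        refine lintegral_congr fun v => ?_
        have hmem : v + s ∈ Set.Ioc s t ↔ v ∈ Set.Ioc (0:ℝ) (t-s) := by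
          simp only [Set.mem_Ioc]
          constructor <;> intro h1 <;> exact ⟨by linarith [h1.1], by linarith [h1.2]⟩
        by_cases hv : v ∈ Set.Ioc (0:ℝ) (t-s)
        · rw [Set.indicator_of_mem (hmem.2 hv), Set.indicator_of_mem hv]
          have e1 : t - (v + s) = (t-s) - v := by ring
          have e2 : v + s - s = v := by ring
          rw [e1, e2]
        · rw [Set.indicator_of_notMem (fun hc => hv (hmem.1 hc)), Set.indicator_of_notMem hv]
      · rw [Set.indicator_of_notMem (fun hc => hs (Set.mem_Ioc.1 hc))]
        have : ∀ u, f u s = 0 := fun u =>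
          if_neg fun hc => hs ⟨hc.2.1, le_trans hc.2.2 hc.1.2⟩
        simp [this]
    calc (∫⁻ u in Set.Ioc (0:ℝ) t, w k (t-u) * ∫⁻ s in Set.Ioc (0:ℝ) u, F k (u-s) * h s)
        = ∫⁻ u, ∫⁻ s, f u s := claimA
      _ = ∫⁻ s, ∫⁻ u, f u s := claimB
      _ = ∫⁻ s, (Set.Ioc (0:ℝ) t).indicator
            (fun s => (∫⁻ v in Set.Ioc (0:ℝ) (t-s), w k ((t-s)-v) * F k v) * h s) s :=
          lintegral_congr claimC
      _ = _ := lintegral_indicator measurableSet_Ioc _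
  have hIk : ∀ k, Measurable fun τ => ∫⁻ v in Set.Ioc (0:ℝ) τ, w k (τ - v) * F k v :=
    fun k => meas_conv (hwm k) (hF k)
  calc ker c b (fun k u => ∫⁻ s in Set.Ioc (0:ℝ) u, F k (u - s) * h s) t
      = ∑' k, ∫⁻ s in Set.Ioc (0:ℝ) t,
          (∫⁻ v in Set.Ioc (0:ℝ) (t-s), w k ((t-s)-v) * F k v) * h s := by
        rw [ker]; exact tsum_congr hk
    _ = ∫⁻ s in Set.Ioc (0:ℝ) t, ∑' k,
          (∫⁻ v in Set.Ioc (0:ℝ) (t-s), w k ((t-s)-v) * F k v) * h s := by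
        exact (lintegral_tsum fun k =>
          (((hIk k).comp (measurable_const.sub measurable_id)).mul hh).aemeasurable).symm
    _ = ∫⁻ s in Set.Ioc (0:ℝ) t, ker c b F (t - s) * h s := by
        refine lintegral_congr fun s => ?_
        rw [ker, ENNReal.tsum_mul_right]

lemma tsum_range_reindex (f : ℕ → ℕ → ℝ≥0∞) :
    ∑' n, ∑ m ∈ Finset.range n, f m (n-1-m) = ∑' m, ∑' q, f m q := by
  have h1 : ∀ n, ∑ m ∈ Finset.range n, f m (n-1-m)
      = ∑' m, if m < n then f m (n-1-m) else 0 := by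
    intro n
    exact (Finset.sum_congr rfl fun m hm => (if_pos (Finset.mem_range.mp hm)).symm).trans
      (tsum_eq_sum (s := Finset.range n) (fun m hm => if_neg (by simpa using hm))).symm
  calc ∑' n, ∑ m ∈ Finset.range n, f m (n-1-m)
      = ∑' n, ∑' m, if m < n then f m (n-1-m) else 0 := tsum_congr h1
    _ = ∑' m, ∑' n, if m < n then f m (n-1-m) else 0 := ENNReal.tsum_comm
    _ = ∑' m, ∑' q, f m q := by
        refine tsum_congr fun m => ?_
        have hinj : Function.Injective fun q : ℕ => q + m + 1 := fun a b hab => by simpa using hab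
        have hsupp : Function.support (fun n => if m < n then f m (n-1-m) else 0)
            ⊆ Set.range fun q : ℕ => q + m + 1 := by
          intro n hn
          have hmn : m < n := by
            by_contra hc
            exact hn (if_neg hc)
          exact ⟨n - m - 1, by show n - m - 1 + m + 1 = n; omega⟩
        rw [← Function.Injective.tsum_eq hinj hsupp]
        refine tsum_congr fun q => ?_
        show (if m < q + m + 1 then f m (q + m + 1 - 1 - m) else 0) = f m q
        rw [if_pos (by omega)]
        congr 1
        omega

lemma tsum_comm4 (T : ℕ → ℕ → ℕ → ℕ → ℝ≥0∞) :
    ∑' m, ∑' q, ∑' l, ∑' k, T m q l k = ∑' l, ∑' k, ∑' m, ∑' q, T m q l k := by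
  calc ∑' m, ∑' q, ∑' l, ∑' k, T m q l k
      = ∑' m, ∑' l, ∑' q, ∑' k, T m q l k := tsum_congr fun m => ENNReal.tsum_comm
    _ = ∑' l, ∑' m, ∑' q, ∑' k, T m q l k := ENNReal.tsum_comm
    _ = ∑' l, ∑' m, ∑' k, ∑' q, T m q l k :=
        tsum_congr fun l => tsum_congr fun m => ENNReal.tsum_comm
    _ = ∑' l, ∑' k, ∑' m, ∑' q, T m q l k := tsum_congr fun l => ENNReal.tsum_comm

end MTPEaux

open MTPEaux

/-- the Feller minimal transition functions
`R_ij(t) = Σ_n R^(n)_ij(t)` and `Q_ij(t) = Σ_n Q^(n)_ij(t)` of `R` and of the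
bounded perturbation `Q = R + A` satisfy
`Q_ij(t) = Σ_{l,k} ∫_0^t e^{-γ(t-s)} R_il(t-s) a'_lk Q_kj(s) ds + R_ij(t) e^{-γt}`
with `a'_lk = a_lk + γ δ_lk` and `γ = sup_i a_i`. -/
theorem minimal_transition_perturbation_equation
    (R A : ℕ → ℕ → ℝ) (γ : ℝ)
    (hRpos : ∀ i j, i ≠ j → 0 ≤ R i j)
    (hRstable : ∀ i, Summable (R i))
    (hRcons : ∀ i, ∑' j, R i j = 0)
    (hApos : ∀ i j, i ≠ j → 0 ≤ A i j)
    (hAstable : ∀ i, Summable (A i))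
    (hAcons : ∀ i, ∑' j, A i j = 0)
    (hbdd : BddAbove (Set.range fun i => -A i i))
    (hγ : γ = ⨆ i, -A i i)
    (Rn Qn : ℕ → ℕ → ℕ → ℝ → ℝ≥0∞)
    (hRn0 : ∀ i j t, 0 ≤ t → Rn 0 i j t =
      if i = j then ENNReal.ofReal (Real.exp (R i i * t)) else 0)
    (hRnrec : ∀ n i j t, 0 ≤ t → Rn (n + 1) i j t =
      ∑' k, if k = i then 0 else
        ∫⁻ s in Set.Ioc (0 : ℝ) t,
          ENNReal.ofReal (Real.exp (R i i * (t - s)) * R i k) * Rn n k j s)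
    (hQn0 : ∀ i j t, 0 ≤ t → Qn 0 i j t =
      if i = j then ENNReal.ofReal (Real.exp ((R i i - γ) * t)) else 0)
    (hQnrec : ∀ n i j t, 0 ≤ t → Qn (n + 1) i j t =
      ∑' k, ∫⁻ s in Set.Ioc (0 : ℝ) t,
        ENNReal.ofReal (Real.exp ((R i i - γ) * (t - s)) *
          ((A i k + if i = k then γ else 0) + if k = i then 0 else R i k)) * Qn n k j s)
    (Rmin Qmin : ℕ → ℕ → ℝ → ℝ≥0∞)
    (hRmin : ∀ i j t, Rmin i j t = ∑' n, Rn n i j t)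
    (hQmin : ∀ i j t, Qmin i j t = ∑' n, Qn n i j t) :
    ∀ i j t, 0 ≤ t →
      Qmin i j t =
        (∑' l, ∑' k, ∫⁻ s in Set.Ioc (0 : ℝ) t,
          ENNReal.ofReal (Real.exp (-γ * (t - s))) * Rmin i l (t - s) *
            ENNReal.ofReal (A l k + if l = k then γ else 0) * Qmin k j s)
        + Rmin i j t * ENNReal.ofReal (Real.exp (-γ * t)) := by
  intro i₀ j t₀ ht₀
  classical
  set a' : ℕ → ℕ → ℝ := fun l k => A l k + if l = k then γ else 0 with ha'def
  set r' : ℕ → ℕ → ℝ := fun l k => if k = l then 0 else R l k with hr'def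
  have hγ0 : ∀ k, -A k k ≤ γ := fun k => hγ ▸ le_ciSup hbdd k
  have ha'pos : ∀ l k, 0 ≤ a' l k := by
    intro l k
    by_cases h : l = k
    · subst h
      have e : a' l l = A l l + γ := by simp [ha'def]
      rw [e]; linarith [hγ0 l]
    · simp only [ha'def, if_neg h, add_zero]; exact hApos l k h
  have hr'pos : ∀ l k, 0 ≤ r' l k := by
    intro l k
    by_cases h : k = l
    · simp [hr'def, h]
    · simp only [hr'def, if_neg h]; exact hRpos l k fun e => h e.symm
  set qh : ℕ → ℕ → ℝ → ℝ≥0∞ := fun n k s => if 0 ≤ s then Qn n k j s else 0 with hqhdef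
  set rh : ℕ → ℕ → ℕ → ℝ → ℝ≥0∞ :=
    fun p i l τ => if 0 ≤ τ then ENNReal.ofReal (Real.exp (-γ*τ)) * Rn p i l τ else 0 with hrhdef
  -- base formulas
  have qh0eq : ∀ k t, qh 0 k t = if 0 ≤ t then
      (if k = j then ENNReal.ofReal (Real.exp ((R k k - γ)*t)) else 0) else 0 := by
    intro k t
    by_cases ht : 0 ≤ t
    · rw [if_pos ht, show qh 0 k t = Qn 0 k j t from if_pos ht, hQn0 k j t ht]
    · rw [if_neg ht, show qh 0 k t = 0 from if_neg ht]
  have rh0eq : ∀ i l t, rh 0 i l t = if 0 ≤ t then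
      (if i = l then ENNReal.ofReal (Real.exp ((R i i - γ)*t)) else 0) else 0 := by
    intro i l t
    by_cases ht : 0 ≤ t
    · rw [if_pos ht,
        show rh 0 i l t = ENNReal.ofReal (Real.exp (-γ*t)) * Rn 0 i l t from if_pos ht,
        hRn0 i l t ht]
      by_cases hil : i = l
      · rw [if_pos hil, if_pos hil, ← ENNReal.ofReal_mul (Real.exp_nonneg _), ← Real.exp_add,
          show -γ*t + R i i * t = (R i i - γ)*t from by ring]
      · rw [if_neg hil, if_neg hil, mul_zero]
    · rw [if_neg ht, show rh 0 i l t = 0 from if_neg ht]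
  -- measurability of base
  have mqh0 : ∀ k, Measurable (qh 0 k) := by
    intro k
    rw [show qh 0 k = fun t => if 0 ≤ t then
        (if k = j then ENNReal.ofReal (Real.exp ((R k k - γ)*t)) else 0) else 0 from
      funext (qh0eq k)]
    by_cases hkj : k = j
    · simp only [if_pos hkj]
      exact Measurable.ite (measurableSet_le measurable_const measurable_id)
        ((Real.continuous_exp.comp (continuous_const.mul continuous_id)).measurable.ennreal_ofReal)
        measurable_const
    · simp only [if_neg hkj, ite_self]
      exact measurable_const
  have mrh0 : ∀ i l, Measurable (fun t => rh 0 i l t) := by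
    intro i l
    rw [show (fun t => rh 0 i l t) = fun t => if 0 ≤ t then
        (if i = l then ENNReal.ofReal (Real.exp ((R i i - γ)*t)) else 0) else 0 from
      funext (rh0eq i l)]
    by_cases hil : i = l
    · simp only [if_pos hil]
      exact Measurable.ite (measurableSet_le measurable_const measurable_id)
        ((Real.continuous_exp.comp (continuous_const.mul continuous_id)).measurable.ennreal_ofReal)
        measurable_const
    · simp only [if_neg hil, ite_self]
      exact measurable_const
  -- recursions in kernel form
  have qhrec : ∀ n k, qh (n+1) k = ker (R k k - γ) (fun m => a' k m + r' k m) (qh n) := by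
    intro n k
    funext t
    by_cases ht : 0 ≤ t
    · rw [show qh (n+1) k t = Qn (n+1) k j t from if_pos ht, hQnrec n k j t ht, ker]
      refine tsum_congr fun m => ?_
      refine setLIntegral_congr_fun measurableSet_Ioc (fun s hs => ?_)
      rw [show qh n m s = Qn n m j s from if_pos hs.1.le]
    · rw [show qh (n+1) k t = 0 from if_neg ht, ker_neg (le_of_not_ge ht)]
  have rhrec : ∀ p i l,
      (fun t => rh (p+1) i l t) = fun t => ker (R i i - γ) (r' i) (fun k s => rh p k l s) t := by
    intro p i l
    funext t
    by_cases ht : 0 ≤ t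
    · rw [show rh (p+1) i l t = ENNReal.ofReal (Real.exp (-γ*t)) * Rn (p+1) i l t from if_pos ht,
        hRnrec p i l t ht, ker, ← ENNReal.tsum_mul_left]
      refine tsum_congr fun k => ?_
      by_cases hk : k = i
      · rw [if_pos hk, mul_zero]
        have hz : r' i k = 0 := if_pos hk
        symm
        calc ∫⁻ s in Set.Ioc (0:ℝ) t,
              ENNReal.ofReal (Real.exp ((R i i - γ)*(t-s)) * r' i k) * rh p k l s
            = ∫⁻ s in Set.Ioc (0:ℝ) t, 0 := by
              refine lintegral_congr fun s => ?_
              rw [hz, mul_zero, ENNReal.ofReal_zero, zero_mul]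
          _ = 0 := lintegral_zero
      · rw [if_neg hk, ← lintegral_const_mul' _ _ ENNReal.ofReal_ne_top]
        refine setLIntegral_congr_fun measurableSet_Ioc
          (fun s hs => ?_)
        rw [show rh p k l s = ENNReal.ofReal (Real.exp (-γ*s)) * Rn p k l s from if_pos hs.1.le,
          show r' i k = R i k from if_neg hk, ← mul_assoc, ← mul_assoc]
        congr 1
        rw [← ENNReal.ofReal_mul (Real.exp_nonneg _),
          ← ENNReal.ofReal_mul (mul_nonneg (Real.exp_nonneg _) (hRpos i k fun e => hk e.symm))]
        congr 1
        calc Real.exp (-γ*t) * (Real.exp (R i i * (t-s)) * R i k)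
            = Real.exp (-γ*t + R i i * (t-s)) * R i k := by rw [← mul_assoc, ← Real.exp_add]
          _ = Real.exp ((R i i - γ)*(t-s) + -γ*s) * R i k := by
              rw [show -γ*t + R i i * (t-s) = (R i i - γ)*(t-s) + -γ*s from by ring]
          _ = Real.exp ((R i i - γ)*(t-s)) * R i k * Real.exp (-γ*s) := by
              rw [Real.exp_add]; ring
    · rw [show rh (p+1) i l t = 0 from if_neg ht, ker_neg (le_of_not_ge ht)]
  -- measurability
  have mqh : ∀ n k, Measurable (qh n k) := by
    intro n
    induction n with
    | zero => exact mqh0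
    | succ n ih =>
      intro k
      rw [qhrec n k]
      exact measurable_ker (fun m => add_nonneg (ha'pos k m) (hr'pos k m)) _
  have mrh : ∀ p i l, Measurable (fun t => rh p i l t) := by
    intro p
    induction p with
    | zero => exact mrh0
    | succ p ih =>
      intro i l
      rw [rhrec p i l]
      exact measurable_ker (hr'pos i) _
  -- operators
  set KR : (ℕ → ℝ → ℝ≥0∞) → (ℕ → ℝ → ℝ≥0∞) :=
    fun g k t => ker (R k k - γ) (r' k) g t with hKRdef
  set KA : (ℕ → ℝ → ℝ≥0∞) → (ℕ → ℝ → ℝ≥0∞) :=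
    fun g k t => ker (R k k - γ) (a' k) g t with hKAdef
  set B : ℕ → ℕ → ℝ → ℝ≥0∞ := fun q => KA (qh q) with hBdef
  set P : ℕ → (ℕ → ℝ → ℝ≥0∞) → (ℕ → ℝ → ℝ≥0∞) := fun p => KR^[p] with hPdef
  have mKA : ∀ g k, Measurable (KA g k) := fun g k => measurable_ker (ha'pos k) g
  have mP : ∀ p g, (∀ k, Measurable (g k)) → ∀ k, Measurable (P p g k) := by
    intro p
    induction p with
    | zero => intro g hg k; simpa [hPdef] using hg k
    | succ p ih =>
      intro g hg k
      have : P (p+1) g = KR (P p g) := Function.iterate_succ_apply' KR p g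
      rw [this]
      exact measurable_ker (hr'pos k) _
  -- composition lemma
  have hC : ∀ p (g : ℕ → ℝ → ℝ≥0∞), (∀ k, Measurable (g k)) → ∀ i t,
      P p (KA g) i t = ∑' l, ∑' k, ∫⁻ s in Set.Ioc (0:ℝ) t,
        rh p i l (t-s) * (ENNReal.ofReal (a' l k) * g k s) := by
    intro p
    induction p with
    | zero =>
      intro g hg i t
      have hside : ∀ l, l ≠ i → (∑' k, ∫⁻ s in Set.Ioc (0:ℝ) t,
          rh 0 i l (t-s) * (ENNReal.ofReal (a' l k) * g k s)) = 0 := by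
        intro l hl
        have hz : ∀ k, (∫⁻ s in Set.Ioc (0:ℝ) t,
            rh 0 i l (t-s) * (ENNReal.ofReal (a' l k) * g k s)) = 0 := by
          intro k
          calc (∫⁻ s in Set.Ioc (0:ℝ) t, rh 0 i l (t-s) * (ENNReal.ofReal (a' l k) * g k s))
              = ∫⁻ s in Set.Ioc (0:ℝ) t, 0 := by
                refine setLIntegral_congr_fun measurableSet_Ioc
                  (fun s hs => ?_)
                rw [rh0eq, if_pos (sub_nonneg.2 hs.2), if_neg fun e => hl e.symm, zero_mul]
            _ = 0 := lintegral_zero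
        simp [hz]
      rw [tsum_eq_single i hside]
      show ker (R i i - γ) (a' i) g t = _
      rw [ker]
      refine tsum_congr fun k => ?_
      refine setLIntegral_congr_fun measurableSet_Ioc (fun s hs => ?_)
      rw [rh0eq, if_pos (sub_nonneg.2 hs.2), if_pos rfl, ← mul_assoc,
        ← ENNReal.ofReal_mul (Real.exp_nonneg _)]
    | succ p ih =>
      intro g hg i t
      have hstep : P (p+1) (KA g) = KR (P p (KA g)) := Function.iterate_succ_apply' KR p (KA g)
      rw [hstep]
      have hrepl : P p (KA g) = fun k u => ∑' x : ℕ × ℕ, ∫⁻ s in Set.Ioc (0:ℝ) u,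
          rh p k x.1 (u-s) * (ENNReal.ofReal (a' x.1 x.2) * g x.2 s) := by
        funext k u
        rw [ih g hg k u]
        exact (ENNReal.tsum_prod (f := fun l m => ∫⁻ s in Set.Ioc (0:ℝ) u,
          rh p k l (u-s) * (ENNReal.ofReal (a' l m) * g m s))).symm
      rw [hrepl]
      show ker (R i i - γ) (r' i) _ t = _
      rw [ker_tsum (G := fun (x : ℕ × ℕ) k u => ∫⁻ s in Set.Ioc (0:ℝ) u,
          rh p k x.1 (u-s) * (ENNReal.ofReal (a' x.1 x.2) * g x.2 s))
        (fun x k => meas_conv (mrh p k x.1) (measurable_const.mul (hg x.2))) t]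
      calc ∑' x : ℕ × ℕ, ker (R i i - γ) (r' i) (fun k u => ∫⁻ s in Set.Ioc (0:ℝ) u,
              rh p k x.1 (u-s) * (ENNReal.ofReal (a' x.1 x.2) * g x.2 s)) t
          = ∑' x : ℕ × ℕ, ∫⁻ s in Set.Ioc (0:ℝ) t,
              ker (R i i - γ) (r' i) (fun k τ => rh p k x.1 τ) (t-s) *
                (ENNReal.ofReal (a' x.1 x.2) * g x.2 s) :=
            tsum_congr fun x => ker_conv (fun k τ => rh p k x.1 τ)
              (fun s => ENNReal.ofReal (a' x.1 x.2) * g x.2 s)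
              (fun k => mrh p k x.1) (measurable_const.mul (hg x.2)) t
        _ = ∑' x : ℕ × ℕ, ∫⁻ s in Set.Ioc (0:ℝ) t,
              rh (p+1) i x.1 (t-s) * (ENNReal.ofReal (a' x.1 x.2) * g x.2 s) := by
            refine tsum_congr fun x => lintegral_congr fun s => ?_
            rw [← congrFun (rhrec p i x.1) (t-s)]
        _ = _ := ENNReal.tsum_prod (f := fun l m => ∫⁻ s in Set.Ioc (0:ℝ) t,
              rh (p+1) i l (t-s) * (ENNReal.ofReal (a' l m) * g m s))
  -- decomposition lemma
  have hD : ∀ n k t, qh n k t = rh n k j t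
      + ∑ m ∈ Finset.range n, P m (B (n-1-m)) k t := by
    intro n
    induction n with
    | zero =>
      intro k t
      rw [Finset.range_zero, Finset.sum_empty, add_zero, qh0eq, rh0eq]
    | succ n ih =>
      intro k t
      have step1 : qh (n+1) k t = KA (qh n) k t + KR (qh n) k t := by
        rw [qhrec n k]
        exact ker_add_b (ha'pos k) (hr'pos k) (mqh n) t
      have hqn : qh n = fun k' s => rh n k' j s
          + ∑ m ∈ Finset.range n, P m (B (n-1-m)) k' s :=
        funext fun k' => funext fun s => ih k' s
      have step2 : KR (qh n) k t = rh (n+1) k j t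
          + ∑ m ∈ Finset.range n, P (m+1) (B (n-1-m)) k t := by
        show ker (R k k - γ) (r' k) (qh n) t = _
        rw [hqn]
        have eA : ker (R k k - γ) (r' k) (fun k' s => rh n k' j s) t = rh (n+1) k j t :=
          (congrFun (rhrec n k j) t).symm
        have eB : ∀ m, ker (R k k - γ) (r' k) (P m (B (n-1-m))) t
            = P (m+1) (B (n-1-m)) k t := by
          intro m
          have h2 : P (m+1) (B (n-1-m)) = KR (P m (B (n-1-m))) :=
            Function.iterate_succ_apply' KR m (B (n-1-m))
          rw [h2]
        rw [ker_add_g (g₁ := fun k' s => rh n k' j s)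
          (g₂ := fun k' s => ∑ m ∈ Finset.range n, P m (B (n-1-m)) k' s)
          (fun k' => mrh n k' j) t, eA,
          ker_finsum (F := Finset.range n) (G := fun m => P m (B (n-1-m)))
            (fun m k' => mP m (B (n-1-m)) (fun k'' => mKA (qh (n-1-m)) k'') k') t]
        exact congrArg _ (Finset.sum_congr rfl fun m _ => eB m)
      rw [step1, step2]
      have hsum : ∑ m ∈ Finset.range (n+1), P m (B (n+1-1-m)) k t
          = (∑ m ∈ Finset.range n, P (m+1) (B (n-1-m)) k t) + P 0 (B n) k t := by
        rw [Finset.sum_range_succ' (f := fun m => P m (B (n+1-1-m)) k t)]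
        have e0 : ∀ m, n+1-1-(m+1) = n-1-m := fun m => by omega
        simp only [e0, show n+1-1-0 = n from by omega]
      rw [hsum]
      have hP0 : P 0 (B n) k t = KA (qh n) k t := by
        rw [show P 0 (B n) = B n from rfl, hBdef]
      rw [hP0]
      ring
  -- conversions to Qmin/Rmin
  have hqmQ : ∀ k s, 0 ≤ s → (∑' q, qh q k s) = Qmin k j s := by
    intro k s hs
    rw [hQmin]
    exact tsum_congr fun q => if_pos hs
  have hrmR : ∀ i l τ, 0 ≤ τ →
      (∑' p, rh p i l τ) = ENNReal.ofReal (Real.exp (-γ*τ)) * Rmin i l τ := by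
    intro i l τ hτ
    rw [hRmin, ← ENNReal.tsum_mul_left]
    exact tsum_congr fun p => if_pos hτ
  -- the big double sum
  have hBig : (∑' m, ∑' q, P m (B q) i₀ t₀)
      = ∑' l, ∑' k, ∫⁻ s in Set.Ioc (0:ℝ) t₀,
          ENNReal.ofReal (Real.exp (-γ * (t₀ - s))) * Rmin i₀ l (t₀ - s) *
            ENNReal.ofReal (A l k + if l = k then γ else 0) * Qmin k j s := by
    have e1 : ∀ m q, P m (B q) i₀ t₀ = ∑' l, ∑' k, ∫⁻ s in Set.Ioc (0:ℝ) t₀,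
        rh m i₀ l (t₀-s) * (ENNReal.ofReal (a' l k) * qh q k s) := by
      intro m q
      exact hC m (qh q) (mqh q) i₀ t₀
    calc (∑' m, ∑' q, P m (B q) i₀ t₀)
        = ∑' m, ∑' q, ∑' l, ∑' k, ∫⁻ s in Set.Ioc (0:ℝ) t₀,
            rh m i₀ l (t₀-s) * (ENNReal.ofReal (a' l k) * qh q k s) :=
          tsum_congr fun m => tsum_congr fun q => e1 m q
      _ = ∑' l, ∑' k, ∑' m, ∑' q, ∫⁻ s in Set.Ioc (0:ℝ) t₀,
            rh m i₀ l (t₀-s) * (ENNReal.ofReal (a' l k) * qh q k s) :=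
          tsum_comm4 _
      _ = ∑' l, ∑' k, ∫⁻ s in Set.Ioc (0:ℝ) t₀,
            ENNReal.ofReal (Real.exp (-γ * (t₀ - s))) * Rmin i₀ l (t₀ - s) *
              ENNReal.ofReal (A l k + if l = k then γ else 0) * Qmin k j s := by
          refine tsum_congr fun l => tsum_congr fun k => ?_
          have e2 : ∀ m, (∑' q, ∫⁻ s in Set.Ioc (0:ℝ) t₀,
              rh m i₀ l (t₀-s) * (ENNReal.ofReal (a' l k) * qh q k s))
              = ∫⁻ s in Set.Ioc (0:ℝ) t₀,
                rh m i₀ l (t₀-s) * (ENNReal.ofReal (a' l k) * ∑' q, qh q k s) := by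
            intro m
            refine ((lintegral_tsum fun q =>
              (((mrh m i₀ l).comp (measurable_const.sub measurable_id)).mul
                (measurable_const.mul (mqh q k))).aemeasurable).symm).trans
              (lintegral_congr fun s => ?_)
            calc ∑' q, rh m i₀ l (t₀-s) * (ENNReal.ofReal (a' l k) * qh q k s)
                = ∑' q, rh m i₀ l (t₀-s) * ENNReal.ofReal (a' l k) * qh q k s :=
                  tsum_congr fun q => (mul_assoc _ _ _).symm
              _ = rh m i₀ l (t₀-s) * ENNReal.ofReal (a' l k) * ∑' q, qh q k s :=
                  ENNReal.tsum_mul_left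
              _ = _ := mul_assoc _ _ _
          rw [tsum_congr e2]
          refine ((lintegral_tsum fun m =>
            (((mrh m i₀ l).comp (measurable_const.sub measurable_id)).mul
              (measurable_const.mul (Measurable.ennreal_tsum fun q => mqh q k))).aemeasurable).symm).trans ?_
          refine setLIntegral_congr_fun measurableSet_Ioc
            (fun s hs => ?_)
          calc ∑' m, rh m i₀ l (t₀-s) * (ENNReal.ofReal (a' l k) * ∑' q, qh q k s)
              = (∑' m, rh m i₀ l (t₀-s)) * (ENNReal.ofReal (a' l k) * ∑' q, qh q k s) :=
                ENNReal.tsum_mul_right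
            _ = (ENNReal.ofReal (Real.exp (-γ*(t₀-s))) * Rmin i₀ l (t₀-s)) *
                (ENNReal.ofReal (a' l k) * Qmin k j s) := by
                rw [hrmR i₀ l (t₀-s) (sub_nonneg.2 hs.2), hqmQ k s hs.1.le]
            _ = _ := by rw [ha'def]; ring
  -- final assembly
  calc Qmin i₀ j t₀
      = ∑' n, qh n i₀ t₀ := by
        rw [hQmin]
        exact tsum_congr fun n => (if_pos ht₀).symm
    _ = ∑' n, (rh n i₀ j t₀ + ∑ m ∈ Finset.range n, P m (B (n-1-m)) i₀ t₀) :=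
        tsum_congr fun n => hD n i₀ t₀
    _ = (∑' n, rh n i₀ j t₀)
        + ∑' n, ∑ m ∈ Finset.range n, P m (B (n-1-m)) i₀ t₀ := ENNReal.tsum_add
    _ = (∑' n, rh n i₀ j t₀) + ∑' m, ∑' q, P m (B q) i₀ t₀ := by
        rw [tsum_range_reindex (fun m q => P m (B q) i₀ t₀)]
    _ = _ := by
        rw [hBig, hrmR i₀ j t₀ ht₀, add_comm, mul_comm]
end

section
/- Let R(t) be a (sub-)transition function on ℕ (so R_il(t) ≥ 0 and Σ_l R_il(t) ≤ 1), let a'_lk ≥ 0 satisfy Σ_k a'_lk ≤ γ for all l, and fix j and bounded measurable functions g_i : [0,T] → [0,1]. Then the integral equation x_i(t) = Σ_{l,k} ∫_0^t e^{-γ(t−s)} R_il(t−s) a'_lk x_k(s) ds + g_i(t), for bounded measurable families (x_i)_{i∈ℕ} taking values in [0,1], has at most one solution. -/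
open MeasureTheory ENNReal

private lemma key_bound
    (T γ : ℝ) (hγ : 0 ≤ γ)
    (R : ℕ → ℕ → ℝ → ℝ≥0∞)
    (hRmeas : ∀ i l, Measurable (R i l))
    (hRsub : ∀ i t, ∑' l, R i l t ≤ 1)
    (a' : ℕ → ℕ → ℝ≥0∞)
    (ha' : ∀ l, ∑' k, a' l k ≤ ENNReal.ofReal γ)
    (g : ℕ → ℝ → ℝ≥0∞)
    (x x' : ℕ → ℝ → ℝ≥0∞)
    (hxmeas : ∀ i, Measurable (x i)) (hx'meas : ∀ i, Measurable (x' i))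
    (hx : ∀ i t, t ∈ Set.Icc 0 T →
      x i t = (∑' l, ∑' k, ∫⁻ s in Set.Ioc (0 : ℝ) t,
        ENNReal.ofReal (Real.exp (-γ * (t - s))) * R i l (t - s) * a' l k * x k s) + g i t)
    (hx' : ∀ i t, t ∈ Set.Icc 0 T →
      x' i t = (∑' l, ∑' k, ∫⁻ s in Set.Ioc (0 : ℝ) t,
        ENNReal.ofReal (Real.exp (-γ * (t - s))) * R i l (t - s) * a' l k * x' k s) + g i t)
    (c : ℝ → ℝ≥0∞) (hcmeas : Measurable c)
    (hcle : ∀ k s, s ∈ Set.Icc 0 T → x k s - x' k s ≤ c s) :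
    ∀ i t, t ∈ Set.Icc 0 T →
      x i t - x' i t ≤ ENNReal.ofReal γ * ∫⁻ s in Set.Ioc (0 : ℝ) t, c s := by
  intro i t ht
  have hsub : Set.Ioc (0:ℝ) t ⊆ Set.Icc 0 T := fun s hs =>
    ⟨hs.1.le, hs.2.trans ht.2⟩
  -- measurability helpers
  have hemeas : Measurable fun s : ℝ => ENNReal.ofReal (Real.exp (-γ * (t - s))) :=
    (Real.measurable_exp.comp ((measurable_const.sub measurable_id).const_mul _)).ennreal_ofReal
  have hRmeas' : ∀ l, Measurable fun s : ℝ => R i l (t - s) := fun l =>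
    (hRmeas i l).comp (measurable_const.sub measurable_id)
  have hMmeas : ∀ l k (y : ℕ → ℝ → ℝ≥0∞), (∀ j, Measurable (y j)) →
      Measurable fun s : ℝ =>
        ENNReal.ofReal (Real.exp (-γ * (t - s))) * R i l (t - s) * a' l k * y k s :=
    fun l k y hy => ((hemeas.mul (hRmeas' l)).mul measurable_const).mul (hy k)
  rw [hx i t ht, hx' i t ht]
  set A := ∑' l, ∑' k, ∫⁻ s in Set.Ioc (0 : ℝ) t,
      ENNReal.ofReal (Real.exp (-γ * (t - s))) * R i l (t - s) * a' l k * x k s with hA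
  set A' := ∑' l, ∑' k, ∫⁻ s in Set.Ioc (0 : ℝ) t,
      ENNReal.ofReal (Real.exp (-γ * (t - s))) * R i l (t - s) * a' l k * x' k s with hA'
  have h1 : (A + g i t) - (A' + g i t) ≤ A - A' := by
    rw [tsub_le_iff_right]
    calc A + g i t ≤ ((A - A') + A') + g i t := add_le_add_left le_tsub_add _
      _ = A - A' + (A' + g i t) := add_assoc _ _ _
  refine h1.trans ?_
  rw [tsub_le_iff_right]
  -- bound each integral
  have hint : ∀ l k, (∫⁻ s in Set.Ioc (0 : ℝ) t,
        ENNReal.ofReal (Real.exp (-γ * (t - s))) * R i l (t - s) * a' l k * x k s)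
      ≤ (∫⁻ s in Set.Ioc (0 : ℝ) t,
        ENNReal.ofReal (Real.exp (-γ * (t - s))) * R i l (t - s) * a' l k * c s)
      + ∫⁻ s in Set.Ioc (0 : ℝ) t,
        ENNReal.ofReal (Real.exp (-γ * (t - s))) * R i l (t - s) * a' l k * x' k s := by
    intro l k
    rw [← lintegral_add_left (f := fun s => ENNReal.ofReal (Real.exp (-γ * (t - s))) * R i l (t - s) * a' l k * c s) (((hemeas.mul (hRmeas' l)).mul measurable_const).mul hcmeas)]
    refine setLIntegral_mono
      ((((hemeas.mul (hRmeas' l)).mul measurable_const).mul hcmeas).add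
        (hMmeas l k x' hx'meas)) (fun s hs => ?_)
    set M := ENNReal.ofReal (Real.exp (-γ * (t - s))) * R i l (t - s) * a' l k with hM
    calc M * x k s ≤ M * ((x k s - x' k s) + x' k s) :=
          mul_le_mul_right le_tsub_add _
      _ = M * (x k s - x' k s) + M * x' k s := mul_add _ _ _
      _ ≤ M * c s + M * x' k s :=
          add_le_add_left (mul_le_mul_right (hcle k s (hsub hs)) _) _
  calc A ≤ (∑' l, ∑' k, ∫⁻ s in Set.Ioc (0 : ℝ) t,
        ENNReal.ofReal (Real.exp (-γ * (t - s))) * R i l (t - s) * a' l k * c s) + A' := by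
        rw [hA, hA', ← ENNReal.tsum_add]
        refine ENNReal.tsum_le_tsum fun l => ?_
        rw [← ENNReal.tsum_add]
        exact ENNReal.tsum_le_tsum fun k => hint l k
    _ ≤ ENNReal.ofReal γ * (∫⁻ s in Set.Ioc (0 : ℝ) t, c s) + A' := by
        refine add_le_add_left ?_ _
        -- swap tsums with integral
        have hswap : ∀ l, (∑' k, ∫⁻ s in Set.Ioc (0 : ℝ) t,
            ENNReal.ofReal (Real.exp (-γ * (t - s))) * R i l (t - s) * a' l k * c s)
            = ∫⁻ s in Set.Ioc (0 : ℝ) t, ∑' k,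
              ENNReal.ofReal (Real.exp (-γ * (t - s))) * R i l (t - s) * a' l k * c s :=
          fun l => (lintegral_tsum fun k =>
            (((hemeas.mul (hRmeas' l)).mul measurable_const).mul hcmeas).aemeasurable).symm
        calc (∑' l, ∑' k, ∫⁻ s in Set.Ioc (0 : ℝ) t,
              ENNReal.ofReal (Real.exp (-γ * (t - s))) * R i l (t - s) * a' l k * c s)
            = ∫⁻ s in Set.Ioc (0 : ℝ) t, ∑' l, ∑' k,
              ENNReal.ofReal (Real.exp (-γ * (t - s))) * R i l (t - s) * a' l k * c s := by
              rw [tsum_congr hswap]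
              exact (lintegral_tsum fun l => (Measurable.ennreal_tsum fun k =>
                  ((hemeas.mul (hRmeas' l)).mul measurable_const).mul hcmeas).aemeasurable).symm
          _ ≤ ∫⁻ s in Set.Ioc (0 : ℝ) t, ENNReal.ofReal γ * c s := by
              refine setLIntegral_mono (measurable_const.mul hcmeas) fun s hs => ?_
              calc (∑' l, ∑' k, ENNReal.ofReal (Real.exp (-γ * (t - s))) * R i l (t - s)
                    * a' l k * c s)
                  = ∑' l, ENNReal.ofReal (Real.exp (-γ * (t - s))) * R i l (t - s) * c s
                      * (∑' k, a' l k) := by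
                    refine tsum_congr fun l => ?_
                    rw [← ENNReal.tsum_mul_left]
                    exact tsum_congr fun k => by ring
                _ ≤ ∑' l, 1 * R i l (t - s) * c s * ENNReal.ofReal γ := by
                    refine ENNReal.tsum_le_tsum fun l => ?_
                    refine mul_le_mul' (mul_le_mul_left
                      (mul_le_mul_left ?_ _) _) (ha' l)
                    rw [ENNReal.ofReal_le_one]
                    exact Real.exp_le_one_iff.mpr (by nlinarith [hs.2])
                _ = (∑' l, R i l (t - s)) * (c s * ENNReal.ofReal γ) := by
                    rw [← ENNReal.tsum_mul_right]
                    exact tsum_congr fun l => by ring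
                _ ≤ 1 * (c s * ENNReal.ofReal γ) :=
                    mul_le_mul_left (hRsub i (t - s)) _
                _ = ENNReal.ofReal γ * c s := by ring
          _ = ENNReal.ofReal γ * ∫⁻ s in Set.Ioc (0 : ℝ) t, c s :=
              lintegral_const_mul _ hcmeas

/-- uniqueness of bounded `[0,1]`-valued solutions of the
perturbation integral equation
`x_i(t) = Σ_{l,k} ∫_0^t e^{-γ(t-s)} R_il(t-s) a'_lk x_k(s) ds + g_i(t)`
where `R` is a sub-transition function and `Σ_k a'_lk ≤ γ`. -/
theorem perturbation_equation_uniqueness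
    (T γ : ℝ) (hγ : 0 ≤ γ)
    (R : ℕ → ℕ → ℝ → ℝ≥0∞)
    (hRmeas : ∀ i l, Measurable (R i l))
    (hRsub : ∀ i t, ∑' l, R i l t ≤ 1)
    (a' : ℕ → ℕ → ℝ≥0∞)
    (ha' : ∀ l, ∑' k, a' l k ≤ ENNReal.ofReal γ)
    (g : ℕ → ℝ → ℝ≥0∞)
    (hgmeas : ∀ i, Measurable (g i))
    (hgle : ∀ i t, t ∈ Set.Icc 0 T → g i t ≤ 1)
    (x x' : ℕ → ℝ → ℝ≥0∞)
    (hxmeas : ∀ i, Measurable (x i)) (hx'meas : ∀ i, Measurable (x' i))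
    (hxle : ∀ i t, t ∈ Set.Icc 0 T → x i t ≤ 1)
    (hx'le : ∀ i t, t ∈ Set.Icc 0 T → x' i t ≤ 1)
    (hx : ∀ i t, t ∈ Set.Icc 0 T →
      x i t = (∑' l, ∑' k, ∫⁻ s in Set.Ioc (0 : ℝ) t,
        ENNReal.ofReal (Real.exp (-γ * (t - s))) * R i l (t - s) * a' l k * x k s) + g i t)
    (hx' : ∀ i t, t ∈ Set.Icc 0 T →
      x' i t = (∑' l, ∑' k, ∫⁻ s in Set.Ioc (0 : ℝ) t,
        ENNReal.ofReal (Real.exp (-γ * (t - s))) * R i l (t - s) * a' l k * x' k s) + g i t) :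
    ∀ i t, t ∈ Set.Icc 0 T → x i t = x' i t := by
  set c : ℝ → ℝ≥0∞ := fun s => ⨆ k, ((x k s - x' k s) ⊔ (x' k s - x k s)) with hc
  have hcmeas : Measurable c := by
    refine Measurable.iSup fun k => Measurable.max ?_ ?_
    · exact (hxmeas k).sub (hx'meas k)
    · exact (hx'meas k).sub (hxmeas k)
  have hc1 : ∀ k s, s ∈ Set.Icc 0 T → x k s - x' k s ≤ c s := by
    intro k s _; simp only [hc]
    exact le_iSup_of_le k (le_max_left _ _)
  have hc2 : ∀ k s, s ∈ Set.Icc 0 T → x' k s - x k s ≤ c s := by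
    intro k s _; simp only [hc]
    exact le_iSup_of_le k (le_max_right _ _)
  have hkey : ∀ t, t ∈ Set.Icc 0 T →
      c t ≤ ENNReal.ofReal γ * ∫⁻ s in Set.Ioc (0 : ℝ) t, c s := by
    intro t ht
    refine iSup_le fun k => max_le ?_ ?_
    · exact key_bound T γ hγ R hRmeas hRsub a' ha' g x x' hxmeas hx'meas hx hx'
        c hcmeas hc1 k t ht
    · exact key_bound T γ hγ R hRmeas hRsub a' ha' g x' x hx'meas hxmeas hx' hx
        c hcmeas hc2 k t ht
  -- Gronwall iteration
  have hgron : ∀ n : ℕ, ∀ t, t ∈ Set.Icc 0 T →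
      c t ≤ ENNReal.ofReal ((γ * t) ^ n / n.factorial) := by
    intro n
    induction n with
    | zero =>
      intro t ht
      simp only [pow_zero, Nat.factorial_zero, Nat.cast_one, div_one, ENNReal.ofReal_one]
      refine iSup_le fun k => max_le ?_ ?_
      · exact le_trans (tsub_le_self.trans (hxle k t ht)) le_rfl
      · exact le_trans (tsub_le_self.trans (hx'le k t ht)) le_rfl
    | succ n ih =>
      intro t ht
      refine (hkey t ht).trans ?_
      have hb : (∫⁻ s in Set.Ioc (0 : ℝ) t, c s)
          ≤ ∫⁻ s in Set.Ioc (0 : ℝ) t, ENNReal.ofReal ((γ * s) ^ n / n.factorial) := by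
        refine setLIntegral_mono (by fun_prop) (fun s hs => ?_)
        exact ih s ⟨hs.1.le, hs.2.trans ht.2⟩
      refine le_trans (mul_le_mul_right hb _) ?_
      have hInt : IntegrableOn (fun s : ℝ => (γ * s) ^ n / n.factorial)
          (Set.Ioc (0 : ℝ) t) := by
        apply Continuous.integrableOn_Ioc
        fun_prop
      have hnn : 0 ≤ᵐ[volume.restrict (Set.Ioc (0:ℝ) t)]
          fun s : ℝ => (γ * s) ^ n / n.factorial := by
        filter_upwards [ae_restrict_mem measurableSet_Ioc] with s hs
        have hγs : 0 ≤ γ * s := mul_nonneg hγ hs.1.le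
        positivity
      rw [← ofReal_integral_eq_lintegral_ofReal hInt hnn]
      have hcalc : (∫ s in Set.Ioc (0:ℝ) t, (γ * s) ^ n / n.factorial)
          = γ ^ n / n.factorial * (t ^ (n+1) / (n+1)) := by
        rw [← intervalIntegral.integral_of_le ht.1]
        have : ∀ s : ℝ, (γ * s) ^ n / n.factorial = γ ^ n / n.factorial * s ^ n := by
          intro s; rw [mul_pow]; ring
        simp_rw [this]
        rw [intervalIntegral.integral_const_mul, integral_pow]
        ring
      rw [hcalc, ← ENNReal.ofReal_mul hγ]
      apply le_of_eq
      congr 1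
      rw [mul_pow, Nat.factorial_succ]
      push_cast
      have h1 : (n.factorial : ℝ) ≠ 0 := Nat.cast_ne_zero.mpr n.factorial_ne_zero
      have h2 : (n : ℝ) + 1 ≠ 0 := by positivity
      field_simp
      ring
  -- conclude c t = 0
  intro i t ht
  have hczero : c t = 0 := by
    refine le_antisymm ?_ zero_le
    have hlim : Filter.Tendsto (fun n : ℕ => ENNReal.ofReal ((γ * t) ^ n / n.factorial))
        Filter.atTop (nhds 0) := by
      rw [← ENNReal.ofReal_zero]
      exact ENNReal.tendsto_ofReal (FloorSemiring.tendsto_pow_div_factorial_atTop (γ * t))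
    exact ge_of_tendsto' hlim fun n => hgron n t ht
  have e1 : x i t - x' i t = 0 :=
    le_antisymm ((hc1 i t ht).trans hczero.le) zero_le
  have e2 : x' i t - x i t = 0 :=
    le_antisymm ((hc2 i t ht).trans hczero.le) zero_le
  exact le_antisymm (tsub_eq_zero_iff_le.mp e1) (tsub_eq_zero_iff_le.mp e2)
end

section
/- Let R be a stable conservative Q-matrix on ℕ that is regular (its Feller minimal transition function R(t) satisfies Σ_j R_ij(t) = 1 for all i, t), and let A be a bounded stable conservative Q-matrix with γ = sup_i a_i < ∞. Then Q = R + A is regular, i.e., the Feller minimal transition function Q(t) of Q satisfies Σ_j Q_ij(t) = 1 for all i and t ≥ 0. -/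
open Real Set MeasureTheory ENNReal Filter

theorem lapExp (a s : ℝ) (ha : 0 < a) :
    ∫⁻ t in Ioi s, ENNReal.ofReal (Real.exp (-a * t)) = ENNReal.ofReal (Real.exp (-a*s) / a) := by
  rw [← ofReal_integral_eq_lintegral_ofReal (exp_neg_integrableOn_Ioi s ha)
    (Filter.Eventually.of_forall fun x => (Real.exp_pos _).le)]
  congr 1
  have hderiv : ∀ x ∈ Ici s, HasDerivAt (fun t : ℝ => -Real.exp (-a*t) / a) (Real.exp (-a*x)) x := by
    intro x _
    have h1 : HasDerivAt (fun t : ℝ => -a * t) (-a) x := by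
      simpa using (hasDerivAt_id x).const_mul (-a)
    have h2 := (Real.hasDerivAt_exp (-a*x)).comp x h1
    have h3 := (h2.const_mul (-(1/a)))
    refine (h3.congr_deriv (by field_simp)).congr_of_eventuallyEq (Filter.Eventually.of_forall fun t => ?_)
    simp only [Function.comp]; field_simp
  have hlim : Tendsto (fun t : ℝ => -Real.exp (-a*t) / a) atTop (nhds 0) := by
    have h1 : Tendsto (fun t : ℝ => -a * t) atTop atBot :=
      tendsto_id.const_mul_atTop_of_neg (by linarith)
    have h2 : Tendsto (fun t : ℝ => Real.exp (-a*t)) atTop (nhds 0) :=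
      (Real.tendsto_exp_atBot).comp h1
    simpa using (h2.neg).div_const a
  have := integral_Ioi_of_hasDerivAt_of_tendsto' hderiv (exp_neg_integrableOn_Ioi s ha) hlim
  rw [this]; field_simp; ring

theorem expIoc (c t : ℝ) (hc : c ≤ 0) (ht : 0 ≤ t) :
    (-c) * (∫ s in Ioc (0:ℝ) t, Real.exp (c * (t - s))) = 1 - Real.exp (c*t) := by
  rcases eq_or_lt_of_le hc with h | h
  · subst h; simp
  · have hcne : c ≠ 0 := h.ne
    have key : ∫ s in Ioc (0:ℝ) t, Real.exp (c * (t - s))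
        = (1 - Real.exp (c*t)) / (-c) := by
      rw [← intervalIntegral.integral_of_le ht]
      have hderiv : ∀ x ∈ uIcc (0:ℝ) t,
          HasDerivAt (fun s : ℝ => Real.exp (c*(t-s)) / (-c)) (Real.exp (c*(t-x))) x := by
        intro x _
        have h1 : HasDerivAt (fun s : ℝ => c * (t - s)) (-c) x := by
          simpa using ((hasDerivAt_id x).const_sub t).const_mul c
        have h2 := (Real.hasDerivAt_exp (c*(t-x))).comp x h1
        have h3 := h2.div_const (-c)
        exact h3.congr_deriv (by field_simp)
      have hint : IntervalIntegrable (fun x : ℝ => Real.exp (c*(t-x))) volume 0 t :=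
        (Continuous.intervalIntegrable (by continuity) 0 t)
      have := intervalIntegral.integral_eq_sub_of_hasDerivAt hderiv hint
      rw [this]; rw [sub_self, mul_zero, Real.exp_zero]; ring
    rw [key]; field_simp

noncomputable section

/-- The convolution-type operator appearing in the backward recursion. -/
def Kop (B : ℕ → ℕ → ℝ) (f : ℕ → ℝ → ℝ≥0∞) (i : ℕ) (t : ℝ) : ℝ≥0∞ :=
  ∑' k, if k = i then 0 else
    ∫⁻ s in Ioc (0:ℝ) t, ENNReal.ofReal (Real.exp (B i i * (t - s)) * B i k) * f k s

/-- Measurable surrogate for the iterates. -/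
def gmat (B : ℕ → ℕ → ℝ) : ℕ → ℕ → ℕ → ℝ → ℝ≥0∞
  | 0 => fun i j t => if 0 ≤ t then (if i = j then ENNReal.ofReal (Real.exp (B i i * t)) else 0) else 0
  | (n+1) => fun i j t => if 0 ≤ t then Kop B (fun k s => gmat B n k j s) i t else 0

theorem measurable_inner (B : ℕ → ℕ → ℝ) (i k : ℕ) {f : ℕ → ℝ → ℝ≥0∞}
    (hf : Measurable (f k)) :
    Measurable (fun t => ∫⁻ s in Ioc (0:ℝ) t,
      ENNReal.ofReal (Real.exp (B i i * (t - s)) * B i k) * f k s) := by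
  have key : ∀ t, (∫⁻ s in Ioc (0:ℝ) t,
      ENNReal.ofReal (Real.exp (B i i * (t - s)) * B i k) * f k s)
      = ∫⁻ s, (fun p : ℝ × ℝ => if 0 < p.2 ∧ p.2 ≤ p.1 then
          ENNReal.ofReal (Real.exp (B i i * (p.1 - p.2)) * B i k) * f k p.2 else 0) (t, s) := by
    intro t
    rw [← lintegral_indicator measurableSet_Ioc]
    congr 1
    funext s
    simp only [Set.indicator_apply, Set.mem_Ioc]
  simp only [key]
  apply Measurable.lintegral_prod_right
  have hset : MeasurableSet {p : ℝ × ℝ | 0 < p.2 ∧ p.2 ≤ p.1} := by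
    apply MeasurableSet.inter
    · exact measurableSet_lt measurable_const measurable_snd
    · exact measurableSet_le measurable_snd measurable_fst
  have hbody : Measurable (fun p : ℝ × ℝ =>
      ENNReal.ofReal (Real.exp (B i i * (p.1 - p.2)) * B i k) * f k p.2) := by
    apply Measurable.mul
    · exact (Continuous.measurable (by continuity)).ennreal_ofReal
    · exact hf.comp measurable_snd
  exact Measurable.ite hset hbody measurable_const

theorem measurable_Kop (B : ℕ → ℕ → ℝ) (i : ℕ) {f : ℕ → ℝ → ℝ≥0∞}
    (hf : ∀ k, Measurable (f k)) : Measurable (fun t => Kop B f i t) := by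
  unfold Kop
  apply Measurable.ennreal_tsum
  intro k
  by_cases hk : k = i
  · simp [hk]
  · simp only [if_neg hk]
    exact measurable_inner B i k (hf k)

theorem measurable_gmat (B : ℕ → ℕ → ℝ) : ∀ n i j, Measurable (gmat B n i j) := by
  intro n
  induction n with
  | zero =>
    intro i j
    refine Measurable.ite (measurableSet_le measurable_const measurable_id) ?_ measurable_const
    by_cases h : i = j
    · simp only [if_pos h]
      exact (Continuous.measurable (by continuity)).ennreal_ofReal
    · simp [h]
  | succ n ih =>
    intro i j
    refine Measurable.ite (measurableSet_le measurable_const measurable_id) ?_ measurable_const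
    exact measurable_Kop B i (fun k => ih k j)

section Matrix
variable {B : ℕ → ℕ → ℝ}

theorem summable_offd (hsum : ∀ i, Summable (B i)) (i : ℕ) :
    Summable (fun k => if k = i then 0 else B i k) := by
  refine Summable.congr ((hsum i).indicator {i}ᶜ) ?_
  intro k
  by_cases h : k = i <;> simp [Set.indicator_apply, h]

theorem tsum_offd (hsum : ∀ i, Summable (B i)) (hcons : ∀ i, ∑' j, B i j = 0) (i : ℕ) :
    (∑' k, if k = i then 0 else B i k) = -B i i := by
  have := Summable.tsum_eq_add_tsum_ite (hsum i) i
  rw [hcons i] at this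
  linarith

theorem diag_nonpos (hpos : ∀ i j, i ≠ j → 0 ≤ B i j) (hsum : ∀ i, Summable (B i))
    (hcons : ∀ i, ∑' j, B i j = 0) (i : ℕ) : B i i ≤ 0 := by
  have h1 := tsum_offd hsum hcons i
  have h2 : 0 ≤ ∑' k, if k = i then 0 else B i k := by
    apply tsum_nonneg
    intro k
    by_cases h : k = i
    · simp [h]
    · simpa [h] using hpos i k (fun hh => h (hh.symm ▸ rfl))
  linarith

/-- row sums of the surrogate iterates -/
def Gs (B : ℕ → ℕ → ℝ) (n : ℕ) (i : ℕ) (t : ℝ) : ℝ≥0∞ := ∑' j, gmat B n i j t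

theorem measurable_Gs (n i : ℕ) : Measurable (Gs B n i) :=
  Measurable.ennreal_tsum (fun j => measurable_gmat B n i j)

theorem gmat_neg {n i j : ℕ} {t : ℝ} (ht : t < 0) : gmat B n i j t = 0 := by
  cases n <;> simp [gmat, not_le.mpr ht]

theorem Gs_neg {n i : ℕ} {t : ℝ} (ht : t < 0) : Gs B n i t = 0 := by
  simp [Gs, gmat_neg ht]

theorem Gs_zero (i : ℕ) {t : ℝ} (ht : 0 ≤ t) :
    Gs B 0 i t = ENNReal.ofReal (Real.exp (B i i * t)) := by
  unfold Gs gmat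
  simp only [if_pos ht]
  rw [tsum_eq_single i (by intro j hj; simp [Ne.symm hj])]
  simp

theorem Kop_congr {f f' : ℕ → ℝ → ℝ≥0∞} (h : ∀ k s, 0 < s → f k s = f' k s) (i : ℕ) (t : ℝ) :
    Kop B f i t = Kop B f' i t := by
  unfold Kop
  refine tsum_congr fun k => ?_
  by_cases hk : k = i
  · simp [hk]
  · simp only [if_neg hk]
    refine setLIntegral_congr_fun measurableSet_Ioc (?_)
    intro s hs
    dsimp only; rw [h k s hs.1]

theorem Gs_succ (n i : ℕ) {t : ℝ} (ht : 0 ≤ t) :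
    Gs B (n+1) i t = Kop B (Gs B n) i t := by
  have h1 : Gs B (n+1) i t = ∑' j, Kop B (fun k s => gmat B n k j s) i t := by
    unfold Gs
    refine tsum_congr fun j => ?_
    show gmat B (n+1) i j t = _
    rw [gmat]
    simp only [if_pos ht]
  rw [h1]
  unfold Kop
  rw [ENNReal.tsum_comm]
  refine tsum_congr fun k => ?_
  by_cases hk : k = i
  · simp [hk]
  · simp only [if_neg hk]
    rw [← lintegral_tsum]
    · refine setLIntegral_congr_fun measurableSet_Ioc (?_)
      intro s _
      dsimp only; rw [ENNReal.tsum_mul_left]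
      rfl
    · intro j
      exact ((Continuous.measurable (by continuity)).ennreal_ofReal.mul
        (measurable_gmat B n k j)).aemeasurable

theorem Kop_mono {f f' : ℕ → ℝ → ℝ≥0∞} (h : ∀ k s, f k s ≤ f' k s) (i : ℕ) (t : ℝ) :
    Kop B f i t ≤ Kop B f' i t := by
  unfold Kop
  refine ENNReal.tsum_le_tsum fun k => ?_
  by_cases hk : k = i
  · simp [hk]
  · simp only [if_neg hk]
    exact lintegral_mono fun s => mul_le_mul_right (h k s) _

end Matrix
section Matrix2
variable {B : ℕ → ℕ → ℝ}

theorem Kop_one (hpos : ∀ i j, i ≠ j → 0 ≤ B i j) (hsum : ∀ i, Summable (B i))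
    (hcons : ∀ i, ∑' j, B i j = 0) (i : ℕ) {t : ℝ} (ht : 0 ≤ t) :
    ENNReal.ofReal (Real.exp (B i i * t)) + Kop B (fun _ _ => 1) i t = 1 := by
  have hd : B i i ≤ 0 := diag_nonpos hpos hsum hcons i
  have hoff : ∀ k, k ≠ i → 0 ≤ B i k := fun k hk => hpos i k (fun h => hk (h ▸ rfl))
  have hKone : Kop B (fun _ _ => 1) i t
      = ENNReal.ofReal (-B i i) * ENNReal.ofReal (∫ s in Ioc (0:ℝ) t, Real.exp (B i i * (t - s))) := by
    unfold Kop
    have hstep : ∀ k, (if k = i then 0 else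
        ∫⁻ s in Ioc (0:ℝ) t, ENNReal.ofReal (Real.exp (B i i * (t - s)) * B i k) * 1)
        = ENNReal.ofReal (if k = i then 0 else B i k) *
          ENNReal.ofReal (∫ s in Ioc (0:ℝ) t, Real.exp (B i i * (t - s))) := by
      intro k
      by_cases hk : k = i
      · simp [hk]
      · simp only [if_neg hk, mul_one]
        have h1 : ∀ s : ℝ, ENNReal.ofReal (Real.exp (B i i * (t - s)) * B i k)
            = ENNReal.ofReal (B i k) * ENNReal.ofReal (Real.exp (B i i * (t - s))) := by
          intro s
          rw [mul_comm (Real.exp _), ENNReal.ofReal_mul (hoff k hk)]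
        simp only [h1]
        rw [lintegral_const_mul' _ _ ENNReal.ofReal_ne_top]
        congr 1
        rw [← ofReal_integral_eq_lintegral_ofReal]
        · exact (Continuous.integrableOn_Ioc (by continuity))
        · exact Filter.Eventually.of_forall fun x => (Real.exp_pos _).le
    simp only [hstep]
    rw [ENNReal.tsum_mul_right]
    congr 1
    rw [← ENNReal.ofReal_tsum_of_nonneg, tsum_offd hsum hcons i]
    · intro k
      by_cases hk : k = i
      · simp [hk]
      · simpa [hk] using hoff k hk
    · exact summable_offd hsum i
  have hbt : B i i * t ≤ 0 := mul_nonpos_iff.mpr (Or.inr ⟨hd, ht⟩)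
  have hexp : Real.exp (B i i * t) ≤ 1 := by
    have := Real.exp_le_exp.mpr hbt
    simpa using this
  rw [hKone, ← ENNReal.ofReal_mul (by linarith), expIoc (B i i) t hd ht,
    ← ENNReal.ofReal_add (Real.exp_pos _).le (by linarith)]
  have : Real.exp (B i i * t) + (1 - Real.exp (B i i * t)) = 1 := by ring
  rw [this, ENNReal.ofReal_one]

theorem Kop_add {f f' : ℕ → ℝ → ℝ≥0∞} (hf : ∀ k, Measurable (f k)) (i : ℕ) (t : ℝ) :
    Kop B (fun k s => f k s + f' k s) i t = Kop B f i t + Kop B f' i t := by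
  unfold Kop
  rw [← ENNReal.tsum_add]
  refine tsum_congr fun k => ?_
  by_cases hk : k = i
  · simp [hk]
  · simp only [if_neg hk]
    rw [← lintegral_add_left]
    · congr 1; funext s; ring
    · exact (Continuous.measurable (by continuity)).ennreal_ofReal.mul (hf k)

theorem Kop_tsum {f : ℕ → ℕ → ℝ → ℝ≥0∞} (hf : ∀ n k, Measurable (f n k)) (i : ℕ) (t : ℝ) :
    Kop B (fun k s => ∑' n, f n k s) i t = ∑' n, Kop B (f n) i t := by
  unfold Kop
  rw [ENNReal.tsum_comm]
  refine tsum_congr fun k => ?_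
  by_cases hk : k = i
  · simp [hk]
  · simp only [if_neg hk]
    rw [← lintegral_tsum]
    · congr 1; funext s; rw [ENNReal.tsum_mul_left]
    · intro n
      exact ((Continuous.measurable (by continuity)).ennreal_ofReal.mul (hf n k)).aemeasurable

/-- partial row sums -/
def SV (B : ℕ → ℕ → ℝ) (N : ℕ) (i : ℕ) (t : ℝ) : ℝ≥0∞ := ∑ n ∈ Finset.range N, Gs B n i t

theorem SV_succ (N i : ℕ) {t : ℝ} (ht : 0 ≤ t) :
    SV B (N+1) i t = ENNReal.ofReal (Real.exp (B i i * t)) + Kop B (SV B N) i t := by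
  unfold SV
  rw [Finset.sum_range_succ']
  rw [Gs_zero i ht, add_comm]
  congr 1
  have : ∀ n, Gs B (n+1) i t = Kop B (Gs B n) i t := fun n => Gs_succ n i ht
  simp only [this]
  induction N with
  | zero => simp [Kop]
  | succ N ih =>
    rw [Finset.sum_range_succ, ih]
    rw [← Kop_add (fun k => by
      exact Finset.measurable_sum _ (fun n _ => measurable_Gs n k)) i t]
    congr 1
    funext k s
    rw [Finset.sum_range_succ]

theorem SV_le_one (hpos : ∀ i j, i ≠ j → 0 ≤ B i j) (hsum : ∀ i, Summable (B i))
    (hcons : ∀ i, ∑' j, B i j = 0) : ∀ N i t, SV B N i t ≤ 1 := by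
  intro N
  induction N with
  | zero => intro i t; simp [SV]
  | succ N ih =>
    intro i t
    rcases lt_or_ge t 0 with ht | ht
    · unfold SV
      simp only [Gs_neg ht]
      simp
    · rw [SV_succ N i ht]
      calc ENNReal.ofReal (Real.exp (B i i * t)) + Kop B (SV B N) i t
          ≤ ENNReal.ofReal (Real.exp (B i i * t)) + Kop B (fun _ _ => 1) i t := by
            gcongr
            exact Kop_mono (fun k s => ih k s) i t
        _ = 1 := Kop_one hpos hsum hcons i ht

/-- total row sum -/
def WB (B : ℕ → ℕ → ℝ) (i : ℕ) (t : ℝ) : ℝ≥0∞ := ∑' n, Gs B n i t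

theorem measurable_WB (i : ℕ) : Measurable (WB B i) :=
  Measurable.ennreal_tsum fun n => measurable_Gs n i

theorem WB_le_one (hpos : ∀ i j, i ≠ j → 0 ≤ B i j) (hsum : ∀ i, Summable (B i))
    (hcons : ∀ i, ∑' j, B i j = 0) (i : ℕ) (t : ℝ) : WB B i t ≤ 1 := by
  unfold WB
  rw [ENNReal.tsum_eq_iSup_sum]
  refine iSup_le fun F => ?_
  calc ∑ n ∈ F, Gs B n i t ≤ ∑ n ∈ Finset.range (F.sup id + 1), Gs B n i t := by
        refine Finset.sum_le_sum_of_subset fun n hn => ?_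
        simp only [Finset.mem_range]
        exact Nat.lt_succ_of_le (Finset.le_sup (f := id) hn)
    _ ≤ 1 := SV_le_one hpos hsum hcons _ i t

theorem WB_eq (i : ℕ) {t : ℝ} (ht : 0 ≤ t) :
    WB B i t = ENNReal.ofReal (Real.exp (B i i * t)) + Kop B (WB B) i t := by
  unfold WB
  rw [tsum_eq_zero_add' ENNReal.summable]
  rw [Gs_zero i ht]
  congr 1
  have : ∀ n, Gs B (n+1) i t = Kop B (Gs B n) i t := fun n => Gs_succ n i ht
  simp only [this]
  rw [← Kop_tsum (fun n k => measurable_Gs n k) i t]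
end Matrix2
section Matrix3
variable {B : ℕ → ℕ → ℝ}

theorem gmat_eq (P : ℕ → ℕ → ℕ → ℝ → ℝ≥0∞)
    (hP0 : ∀ i j t, 0 ≤ t → P 0 i j t = if i = j then ENNReal.ofReal (Real.exp (B i i * t)) else 0)
    (hPrec : ∀ n i j t, 0 ≤ t → P (n+1) i j t = Kop B (fun k s => P n k j s) i t) :
    ∀ n i j t, 0 ≤ t → gmat B n i j t = P n i j t := by
  intro n
  induction n with
  | zero =>
    intro i j t ht
    rw [hP0 i j t ht]
    simp [gmat, ht]
  | succ n ih =>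
    intro i j t ht
    rw [hPrec n i j t ht]
    show gmat B (n+1) i j t = _
    rw [gmat]
    simp only [if_pos ht]
    exact Kop_congr (fun k s hs => ih k j s hs.le) i t

theorem DB_eq (hpos : ∀ i j, i ≠ j → 0 ≤ B i j) (hsum : ∀ i, Summable (B i))
    (hcons : ∀ i, ∑' j, B i j = 0) (i : ℕ) {t : ℝ} (ht : 0 ≤ t) :
    (1 : ℝ≥0∞) - WB B i t = Kop B (fun k s => 1 - WB B k s) i t := by
  have hW1 := WB_le_one hpos hsum hcons
  have hcancel : (fun (k : ℕ) (s : ℝ) => (1 - WB B k s) + WB B k s) = fun _ _ => (1:ℝ≥0∞) := by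
    funext k s
    exact tsub_add_cancel_of_le (hW1 k s)
  have hadd := Kop_add (B := B) (f := fun k s => 1 - WB B k s) (f' := fun k s => WB B k s)
    (fun k => measurable_const.sub (measurable_WB k)) i t
  rw [hcancel] at hadd
  have h1 : (1:ℝ≥0∞) = Kop B (fun k s => 1 - WB B k s) i t + WB B i t := by
    calc (1:ℝ≥0∞) = ENNReal.ofReal (Real.exp (B i i * t)) + Kop B (fun _ _ => 1) i t :=
          (Kop_one hpos hsum hcons i ht).symm
      _ = ENNReal.ofReal (Real.exp (B i i * t)) +
          (Kop B (fun k s => 1 - WB B k s) i t + Kop B (WB B) i t) := by rw [← hadd]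
      _ = Kop B (fun k s => 1 - WB B k s) i t +
          (ENNReal.ofReal (Real.exp (B i i * t)) + Kop B (WB B) i t) := by ring
      _ = Kop B (fun k s => 1 - WB B k s) i t + WB B i t := by rw [← WB_eq i ht]
  exact ENNReal.sub_eq_of_eq_add (ne_top_of_le_ne_top one_ne_top (hW1 i t)) h1

theorem lap_Kop {i : ℕ} (lam : ℝ) (hlam : 0 < lam) (hd : B i i ≤ 0)
    (hoff : ∀ k, k ≠ i → 0 ≤ B i k)
    {f : ℕ → ℝ → ℝ≥0∞} (hf : ∀ k, Measurable (f k)) :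
    ∫⁻ t in Ioi (0:ℝ), ENNReal.ofReal (Real.exp (-lam * t)) * Kop B f i t
    = ∑' k, if k = i then 0 else ENNReal.ofReal (B i k / (lam - B i i)) *
        ∫⁻ s in Ioi (0:ℝ), ENNReal.ofReal (Real.exp (-lam * s)) * f k s := by
  have step1 : ∫⁻ t in Ioi (0:ℝ), ENNReal.ofReal (Real.exp (-lam * t)) * Kop B f i t
      = ∑' k, ∫⁻ t in Ioi (0:ℝ), (if k = i then 0 else
          ENNReal.ofReal (Real.exp (-lam * t)) *
          ∫⁻ s in Ioc (0:ℝ) t, ENNReal.ofReal (Real.exp (B i i * (t - s)) * B i k) * f k s) := by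
    rw [← lintegral_tsum]
    · refine setLIntegral_congr_fun measurableSet_Ioi (fun t _ => ?_)
      unfold Kop
      rw [← ENNReal.tsum_mul_left]
      refine tsum_congr fun k => ?_
      by_cases hk : k = i <;> simp [hk]
    · intro k
      by_cases hk : k = i
      · simp [hk]
      · simp only [if_neg hk]
        exact ((Continuous.measurable (by continuity)).ennreal_ofReal.mul
          (measurable_inner B i k (hf k))).aemeasurable
  rw [step1]
  refine tsum_congr fun k => ?_
  by_cases hk : k = i
  · simp [hk]
  simp only [if_neg hk]
  have hck : 0 ≤ B i k := hoff k hk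
  have hlc : 0 < lam - B i i := by linarith
  set H : ℝ → ℝ → ℝ≥0∞ := fun t s => if 0 < s ∧ s ≤ t then
    ENNReal.ofReal (Real.exp (-lam * t)) *
      (ENNReal.ofReal (Real.exp (B i i * (t - s)) * B i k) * f k s) else 0 with hH
  have hHapp : ∀ t s, H t s = if 0 < s ∧ s ≤ t then
      ENNReal.ofReal (Real.exp (-lam * t)) *
        (ENNReal.ofReal (Real.exp (B i i * (t - s)) * B i k) * f k s) else 0 := fun _ _ => rfl
  have hHmeas : Measurable (Function.uncurry H) := by
    have hset : MeasurableSet {p : ℝ × ℝ | 0 < p.2 ∧ p.2 ≤ p.1} :=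
      (measurableSet_lt measurable_const measurable_snd).inter
        (measurableSet_le measurable_snd measurable_fst)
    refine Measurable.ite hset ?_ measurable_const
    refine Measurable.mul ?_ (Measurable.mul ?_ ((hf k).comp measurable_snd))
    · exact (Continuous.measurable
        (by continuity : Continuous fun p : ℝ × ℝ => Real.exp (-lam * p.1))).ennreal_ofReal
    · exact (Continuous.measurable
        (by continuity : Continuous fun p : ℝ × ℝ =>
          Real.exp (B i i * (p.1 - p.2)) * B i k)).ennreal_ofReal
  have inner_eq : ∀ t ∈ Ioi (0:ℝ),
      ENNReal.ofReal (Real.exp (-lam * t)) *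
        (∫⁻ s in Ioc (0:ℝ) t, ENNReal.ofReal (Real.exp (B i i * (t - s)) * B i k) * f k s)
      = ∫⁻ s in Ioi (0:ℝ), H t s := by
    intro t _
    have hind : (fun s => H t s) = (Ioc (0:ℝ) t).indicator
        (fun s => ENNReal.ofReal (Real.exp (-lam * t)) *
          (ENNReal.ofReal (Real.exp (B i i * (t - s)) * B i k) * f k s)) := by
      funext s
      rw [hHapp, Set.indicator_apply]
      by_cases hs : s ∈ Ioc (0:ℝ) t
      · rw [if_pos hs, if_pos (Set.mem_Ioc.mp hs)]
      · rw [if_neg hs, if_neg (fun h => hs (Set.mem_Ioc.mpr h))]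
    rw [hind, lintegral_indicator measurableSet_Ioc, Measure.restrict_restrict measurableSet_Ioc,
      Set.inter_eq_left.mpr Ioc_subset_Ioi_self,
      lintegral_const_mul' _ _ ENNReal.ofReal_ne_top]
  rw [setLIntegral_congr_fun measurableSet_Ioi (inner_eq)]
  rw [lintegral_lintegral_swap (hHmeas.aemeasurable)]
  have inner2 : ∀ s ∈ Ioi (0:ℝ),
      (∫⁻ t in Ioi (0:ℝ), H t s)
      = ENNReal.ofReal (B i k / (lam - B i i)) *
          (ENNReal.ofReal (Real.exp (-lam * s)) * f k s) := by
    intro s hs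
    rw [Set.mem_Ioi] at hs
    have hind : (fun t => H t s) = (Ici s).indicator
        (fun t => ENNReal.ofReal (Real.exp (-(lam - B i i) * t)) *
          (ENNReal.ofReal (Real.exp (-B i i * s) * B i k) * f k s)) := by
      funext t
      rw [hHapp, Set.indicator_apply]
      by_cases hts : t ∈ Ici s
      · rw [if_pos hts, if_pos ⟨hs, Set.mem_Ici.mp hts⟩]
        rw [← mul_assoc, ← mul_assoc, ← ENNReal.ofReal_mul (Real.exp_pos _).le,
          ← ENNReal.ofReal_mul (Real.exp_pos _).le]
        congr 1
        congr 1
        rw [← mul_assoc, ← mul_assoc, ← Real.exp_add, ← Real.exp_add]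
        congr 2
        ring
      · rw [if_neg hts, if_neg (fun h => hts (Set.mem_Ici.mpr h.2))]
    have hIci : Ici s ∩ Ioi (0:ℝ) = Ici s :=
      Set.inter_eq_left.mpr (fun x hx => lt_of_lt_of_le hs hx)
    rw [hind, lintegral_indicator measurableSet_Ici, Measure.restrict_restrict measurableSet_Ici,
      hIci, Measure.restrict_congr_set Ioi_ae_eq_Ici.symm,
      lintegral_mul_const'' _ ((Continuous.measurable
        (by continuity : Continuous fun t : ℝ =>
          Real.exp (-(lam - B i i) * t))).ennreal_ofReal.aemeasurable),
      lapExp (lam - B i i) s hlc]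
    rw [← mul_assoc, ← mul_assoc, ← ENNReal.ofReal_mul (by positivity),
      ← ENNReal.ofReal_mul (by positivity)]
    congr 1
    congr 1
    rw [div_mul_eq_mul_div, div_mul_eq_mul_div]
    congr 1
    rw [← mul_assoc, ← Real.exp_add, mul_comm]
    congr 2
    ring
  rw [setLIntegral_congr_fun measurableSet_Ioi (inner2)]
  rw [lintegral_const_mul' _ _ ENNReal.ofReal_ne_top]
end Matrix3

theorem summable_mul_bound {c w : ℕ → ℝ} (hc : Summable c) (hcnn : ∀ l, 0 ≤ c l)
    (C : ℝ) (hw : ∀ l, 0 ≤ w l ∧ w l ≤ C) : Summable (fun l => c l * w l) :=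
  Summable.of_nonneg_of_le (fun l => mul_nonneg (hcnn l) (hw l).1)
    (fun l => mul_le_mul_of_nonneg_left (hw l).2 (hcnn l)) (hc.mul_right C)

/-- if the stable conservative Q-matrix `R` is regular (its Feller
minimal transition function `Σ_n R^(n)` is honest) and `A` is a bounded stable
conservative Q-matrix, then the perturbation `Q = R + A` is regular. -/
theorem regular_of_regular_perturbation
    (R A : ℕ → ℕ → ℝ) (γ : ℝ)
    (hRpos : ∀ i j, i ≠ j → 0 ≤ R i j)
    (hRstable : ∀ i, Summable (R i))
    (hRcons : ∀ i, ∑' j, R i j = 0)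
    (hApos : ∀ i j, i ≠ j → 0 ≤ A i j)
    (hAstable : ∀ i, Summable (A i))
    (hAcons : ∀ i, ∑' j, A i j = 0)
    (hbdd : BddAbove (Set.range fun i => -A i i))
    (hγ : γ = ⨆ i, -A i i)
    (Rn Qn : ℕ → ℕ → ℕ → ℝ → ℝ≥0∞)
    (hRn0 : ∀ i j t, 0 ≤ t → Rn 0 i j t =
      if i = j then ENNReal.ofReal (Real.exp (R i i * t)) else 0)
    (hRnrec : ∀ n i j t, 0 ≤ t → Rn (n + 1) i j t =
      ∑' k, if k = i then 0 else
        ∫⁻ s in Set.Ioc (0 : ℝ) t,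
          ENNReal.ofReal (Real.exp (R i i * (t - s)) * R i k) * Rn n k j s)
    (hQn0 : ∀ i j t, 0 ≤ t → Qn 0 i j t =
      if i = j then ENNReal.ofReal (Real.exp ((R i i + A i i) * t)) else 0)
    (hQnrec : ∀ n i j t, 0 ≤ t → Qn (n + 1) i j t =
      ∑' k, if k = i then 0 else
        ∫⁻ s in Set.Ioc (0 : ℝ) t,
          ENNReal.ofReal (Real.exp ((R i i + A i i) * (t - s)) * (R i k + A i k)) * Qn n k j s)
    (hRreg : ∀ i t, 0 ≤ t → (∑' j, ∑' n, Rn n i j t) = 1) :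
    ∀ i t, 0 ≤ t → (∑' j, ∑' n, Qn n i j t) = 1 := by
  classical
  -- the perturbed matrix
  set Q : ℕ → ℕ → ℝ := fun i j => R i j + A i j with hQdef
  have hQpos : ∀ i j, i ≠ j → 0 ≤ Q i j := fun i j h => add_nonneg (hRpos i j h) (hApos i j h)
  have hQsum : ∀ i, Summable (Q i) := fun i => (hRstable i).add (hAstable i)
  have hQcons : ∀ i, ∑' j, Q i j = 0 := by
    intro i
    show ∑' j, (R i j + A i j) = 0
    rw [Summable.tsum_add (hRstable i) (hAstable i), hRcons i, hAcons i, add_zero]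
  have hRdiag : ∀ i, R i i ≤ 0 := diag_nonpos hRpos hRstable hRcons
  have hAdiag : ∀ i, A i i ≤ 0 := diag_nonpos hApos hAstable hAcons
  have hQdiag : ∀ i, Q i i ≤ 0 := diag_nonpos hQpos hQsum hQcons
  have haγ : ∀ i, -A i i ≤ γ := by
    intro i; rw [hγ]; exact le_ciSup hbdd i
  have hγ0 : 0 ≤ γ := le_trans (by linarith [hAdiag 0]) (haγ 0)
  -- correspondence with the abstract iterates
  have hgQ : ∀ n i j t, 0 ≤ t → gmat Q n i j t = Qn n i j t := by
    refine gmat_eq Qn (fun i j t ht => hQn0 i j t ht) (fun n i j t ht => ?_)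
    rw [hQnrec n i j t ht]; rfl
  have hgR : ∀ n i j t, 0 ≤ t → gmat R n i j t = Rn n i j t := by
    refine gmat_eq Rn (fun i j t ht => hRn0 i j t ht) (fun n i j t ht => ?_)
    rw [hRnrec n i j t ht]; rfl
  -- honesty of R in terms of WB
  have hWR : ∀ i t, 0 ≤ t → WB R i t = 1 := by
    intro i t ht
    unfold WB Gs
    rw [ENNReal.tsum_comm]
    rw [← hRreg i t ht]
    exact tsum_congr fun j => tsum_congr fun n => hgR n i j t ht
  set lam : ℝ := γ + 1 with hlamdef
  have hlam0 : 0 < lam := by linarith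
  -- deficiency of Q
  set D : ℕ → ℝ → ℝ≥0∞ := fun k s => 1 - WB Q k s with hDdef
  have hDmeas : ∀ k, Measurable (D k) := fun k => measurable_const.sub (measurable_WB k)
  have hDle : ∀ k s, D k s ≤ 1 := fun k s => tsub_le_self
  set z : ℕ → ℝ≥0∞ := fun k =>
    ∫⁻ s in Ioi (0:ℝ), ENNReal.ofReal (Real.exp (-lam * s)) * D k s with hzdef
  have hlap_one : (∫⁻ s in Ioi (0:ℝ), ENNReal.ofReal (Real.exp (-lam * s)))
      = ENNReal.ofReal (1/lam) := by
    have := lapExp lam 0 hlam0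
    simpa using this
  have hz_le : ∀ k, z k ≤ ENNReal.ofReal (1/lam) := by
    intro k
    rw [hzdef, ← hlap_one]
    exact lintegral_mono fun s => by
      calc ENNReal.ofReal (Real.exp (-lam * s)) * D k s
          ≤ ENNReal.ofReal (Real.exp (-lam * s)) * 1 := mul_le_mul_right (hDle k s) _
        _ = _ := mul_one _
  have hz_ne_top : ∀ k, z k ≠ ⊤ := fun k => ne_top_of_le_ne_top ENNReal.ofReal_ne_top (hz_le k)
  have hz_eq : ∀ k, z k = ∑' l, if l = k then 0 else
      ENNReal.ofReal (Q k l / (lam - Q k k)) * z l := by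
    intro k
    have h1 : z k = ∫⁻ s in Ioi (0:ℝ),
        ENNReal.ofReal (Real.exp (-lam * s)) * Kop Q D k s := by
      rw [hzdef]
      refine setLIntegral_congr_fun measurableSet_Ioi (fun s hs => ?_)
      rw [show D k s = Kop Q D k s from
        DB_eq hQpos hQsum hQcons k (le_of_lt (Set.mem_Ioi.mp hs))]
    rw [h1, lap_Kop lam hlam0 (hQdiag k) (fun l hl => hQpos k l (fun h => hl (h ▸ rfl))) hDmeas]
  -- Laplace transforms of the R-iterates
  set ρ : ℕ → ℕ → ℝ≥0∞ := fun n k =>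
    ∫⁻ s in Ioi (0:ℝ), ENNReal.ofReal (Real.exp (-lam * s)) * Gs R n k s with hρdef
  have hρ0 : ∀ k, ρ 0 k = ENNReal.ofReal (1/(lam - R k k)) := by
    intro k
    have h1 : ρ 0 k = ∫⁻ s in Ioi (0:ℝ), ENNReal.ofReal (Real.exp (-(lam - R k k) * s)) := by
      rw [hρdef]
      refine setLIntegral_congr_fun measurableSet_Ioi (fun s hs => ?_)
      rw [Gs_zero k (le_of_lt hs), ← ENNReal.ofReal_mul (Real.exp_pos _).le, ← Real.exp_add]
      congr 2
      ring
    rw [h1, lapExp (lam - R k k) 0 (by linarith [hRdiag k])]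
    simp
  have hρrec : ∀ n k, ρ (n+1) k = ∑' l, if l = k then 0 else
      ENNReal.ofReal (R k l / (lam - R k k)) * ρ n l := by
    intro n k
    have h1 : ρ (n+1) k = ∫⁻ s in Ioi (0:ℝ),
        ENNReal.ofReal (Real.exp (-lam * s)) * Kop R (Gs R n) k s := by
      rw [hρdef]
      refine setLIntegral_congr_fun measurableSet_Ioi (fun s hs => ?_)
      rw [Gs_succ n k (le_of_lt hs)]
    rw [h1, lap_Kop lam hlam0 (hRdiag k) (fun l hl => hRpos k l (fun h => hl (h ▸ rfl)))
      (fun l => measurable_Gs n l)]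
  have hρsum : ∀ k, ∑' n, ρ n k = ENNReal.ofReal (1/lam) := by
    intro k
    have h1 : ∑' n, ρ n k = ∫⁻ s in Ioi (0:ℝ),
        ENNReal.ofReal (Real.exp (-lam * s)) * WB R k s := by
      rw [hρdef, ← lintegral_tsum]
      · refine setLIntegral_congr_fun measurableSet_Ioi
          (fun s _ => ?_)
        rw [ENNReal.tsum_mul_left]
        rfl
      · have hcont : Continuous fun s : ℝ => Real.exp (-lam * s) :=
          Real.continuous_exp.comp (continuous_const.mul continuous_id)
        exact fun n => (hcont.measurable.ennreal_ofReal.mul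
          (measurable_Gs n k)).aemeasurable
    rw [h1, ← hlap_one]
    refine setLIntegral_congr_fun measurableSet_Ioi (fun s hs => ?_)
    rw [hWR k s (le_of_lt hs), mul_one]
  have hρ_le : ∀ n k, ρ n k ≤ ENNReal.ofReal (1/lam) := by
    intro n k
    rw [← hρsum k]
    exact ENNReal.le_tsum n
  have hρ_ne_top : ∀ n k, ρ n k ≠ ⊤ :=
    fun n k => ne_top_of_le_ne_top ENNReal.ofReal_ne_top (hρ_le n k)
  -- real-variable quantities
  set ζ : ℕ → ℝ := fun k => (z k).toReal with hζdef
  set u : ℕ → ℕ → ℝ := fun n k => (ρ n k).toReal with hudef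
  have hζnn : ∀ k, 0 ≤ ζ k := fun k => ENNReal.toReal_nonneg
  have hunn : ∀ n k, 0 ≤ u n k := fun n k => ENNReal.toReal_nonneg
  have hζle : ∀ k, ζ k ≤ 1/lam := by
    intro k
    have := ENNReal.toReal_mono ENNReal.ofReal_ne_top (hz_le k)
    rwa [ENNReal.toReal_ofReal (by positivity)] at this
  have hRkkpos : ∀ k, 0 < lam - R k k := fun k => by linarith [hRdiag k]
  have hQkkpos : ∀ k, 0 < lam - Q k k := fun k => by linarith [hQdiag k]
  have hRQden : ∀ k, lam - R k k ≤ lam - Q k k := by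
    intro k
    have : Q k k = R k k + A k k := rfl
    rw [this]; linarith [hAdiag k]
  have hu0 : ∀ k, u 0 k = 1/(lam - R k k) := by
    intro k
    show (ρ 0 k).toReal = _
    rw [hρ0 k, ENNReal.toReal_ofReal (one_div_nonneg.mpr (hRkkpos k).le)]
  have husummable : ∀ k, Summable (fun n => u n k) := by
    intro k
    exact ENNReal.summable_toReal (by rw [hρsum k]; exact ENNReal.ofReal_ne_top)
  have husum : ∀ k, ∑' n, u n k = 1/lam := by
    intro k
    show (∑' n, (ρ n k).toReal) = 1/lam
    rw [← ENNReal.tsum_toReal_eq (fun n => hρ_ne_top n k), hρsum k,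
      ENNReal.toReal_ofReal (by positivity)]
  have hpartial_le : ∀ N k, ∑ n ∈ Finset.range N, u n k ≤ 1/lam := by
    intro N k
    rw [← husum k]
    exact Summable.sum_le_tsum _ (fun n _ => hunn n k) (husummable k)
  have hule : ∀ n k, u n k ≤ 1/lam := by
    intro n k
    calc u n k ≤ ∑ m ∈ Finset.range (n+1), u m k := by
          refine Finset.single_le_sum (fun m _ => hunn m k) ?_
          simp
      _ ≤ 1/lam := hpartial_le _ k
  have hurec : ∀ n k, u (n+1) k
      = ∑' l, if l = k then 0 else (R k l/(lam - R k k)) * u n l := by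
    intro n k
    show (ρ (n+1) k).toReal = _
    rw [hρrec n k, ENNReal.tsum_toReal_eq]
    · refine tsum_congr fun l => ?_
      by_cases hl : l = k
      · simp [hl]
      · simp only [if_neg hl, ENNReal.toReal_mul,
          ENNReal.toReal_ofReal (div_nonneg (hRpos k l (fun h => hl (h ▸ rfl))) (hRkkpos k).le)]; rfl
    · intro l
      by_cases hl : l = k
      · simp [hl]
      · simp only [if_neg hl]
        exact ENNReal.mul_ne_top ENNReal.ofReal_ne_top (hρ_ne_top n l)
  have hζeq : ∀ k, ζ k = ∑' l, if l = k then 0 else (Q k l/(lam - Q k k)) * ζ l := by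
    intro k
    show (z k).toReal = _
    rw [hz_eq k, ENNReal.tsum_toReal_eq]
    · refine tsum_congr fun l => ?_
      by_cases hl : l = k
      · simp [hl]
      · simp only [if_neg hl, ENNReal.toReal_mul,
          ENNReal.toReal_ofReal (div_nonneg (hQpos k l (fun h => hl (h ▸ rfl))) (hQkkpos k).le)]; rfl
    · intro l
      by_cases hl : l = k
      · simp [hl]
      · simp only [if_neg hl]
        exact ENNReal.mul_ne_top ENNReal.ofReal_ne_top (hz_ne_top l)
  -- coefficients
  set cR : ℕ → ℕ → ℝ := fun k l => if l = k then 0 else R k l/(lam - R k k) with hcRdef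
  have hcRnn : ∀ k l, 0 ≤ cR k l := by
    intro k l
    by_cases hl : l = k
    · simp [hcRdef, hl]
    · simp only [hcRdef, if_neg hl]
      exact div_nonneg (hRpos k l (fun h => hl (h ▸ rfl))) (hRkkpos k).le
  have hcRsummable : ∀ k, Summable (cR k) := by
    intro k
    have h1 : Summable (fun l => (if l = k then 0 else R k l)/(lam - R k k)) :=
      (summable_offd hRstable k).div_const _
    refine h1.congr fun l => ?_
    by_cases hl : l = k <;> simp [hcRdef, hl]
  have hcRtsum : ∀ k, ∑' l, cR k l = (-R k k)/(lam - R k k) := by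
    intro k
    have h1 : ∀ l, cR k l = (if l = k then 0 else R k l)/(lam - R k k) := by
      intro l
      by_cases hl : l = k <;> simp [hcRdef, hl]
    simp only [h1]
    rw [tsum_div_const, tsum_offd hRstable hRcons k]
  -- key one-step inequality
  set M : ℝ := ⨆ k, ζ k with hMdef
  have hbddζ : BddAbove (Set.range ζ) := ⟨1/lam, by rintro x ⟨k, rfl⟩; exact hζle k⟩
  have hζleM : ∀ k, ζ k ≤ M := fun k => le_ciSup hbddζ k
  have hM0 : 0 ≤ M := le_trans (hζnn 0) (hζleM 0)
  have hkey : ∀ k, ζ k ≤ (∑' l, cR k l * ζ l) + γ*M/(lam - R k k) := by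
    intro k
    rw [hζeq k]
    have hsplit : ∀ l, (if l = k then 0 else (Q k l/(lam - Q k k)) * ζ l)
        = (if l = k then 0 else (R k l/(lam - Q k k)) * ζ l)
          + (if l = k then 0 else (A k l/(lam - Q k k)) * ζ l) := by
      intro l
      by_cases hl : l = k
      · simp [hl]
      · simp only [if_neg hl]
        have : Q k l = R k l + A k l := rfl
        rw [this, add_div, add_mul]
    have hS1 : Summable (fun l => if l = k then 0 else (R k l/(lam - Q k k)) * ζ l) := by
      refine Summable.of_nonneg_of_le (fun l => ?_) (fun l => ?_)
        ((hcRsummable k).mul_right (1/lam))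
      · by_cases hl : l = k
        · simp [hl]
        · simp only [if_neg hl]
          exact mul_nonneg (div_nonneg (hRpos k l (fun h => hl (h ▸ rfl))) (hQkkpos k).le)
            (hζnn l)
      · by_cases hl : l = k
        · simp [hl, hcRdef]
        · simp only [if_neg hl, hcRdef]
          have h2 : R k l/(lam - Q k k) ≤ R k l/(lam - R k k) :=
            div_le_div_of_nonneg_left (hRpos k l (fun h => hl (h ▸ rfl))) (hRkkpos k)
              (hRQden k)
          exact mul_le_mul h2 (hζle l) (hζnn l)
            (div_nonneg (hRpos k l (fun h => hl (h ▸ rfl))) (hRkkpos k).le)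
    have hS2 : Summable (fun l => if l = k then 0 else (A k l/(lam - Q k k)) * ζ l) := by
      have hA1 : Summable (fun l => ((if l = k then 0 else A k l)/(lam - Q k k)) * (1/lam)) :=
        (((summable_offd hAstable k).div_const _).mul_right _)
      refine Summable.of_nonneg_of_le (fun l => ?_) (fun l => ?_) hA1
      · by_cases hl : l = k
        · simp [hl]
        · simp only [if_neg hl]
          exact mul_nonneg (div_nonneg (hApos k l (fun h => hl (h ▸ rfl))) (hQkkpos k).le)
            (hζnn l)
      · by_cases hl : l = k
        · simp [hl]
        · simp only [if_neg hl]
          exact mul_le_mul le_rfl (hζle l) (hζnn l)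
            (div_nonneg (hApos k l (fun h => hl (h ▸ rfl))) (hQkkpos k).le)
    calc (∑' l, if l = k then 0 else (Q k l/(lam - Q k k)) * ζ l)
        = (∑' l, if l = k then 0 else (R k l/(lam - Q k k)) * ζ l)
          + (∑' l, if l = k then 0 else (A k l/(lam - Q k k)) * ζ l) := by
          rw [← Summable.tsum_add hS1 hS2]
          exact tsum_congr hsplit
      _ ≤ (∑' l, cR k l * ζ l) + γ*M/(lam - R k k) := by
          gcongr ?_ + ?_
          · refine Summable.tsum_le_tsum (fun l => ?_) hS1
              (summable_mul_bound (hcRsummable k) (hcRnn k) (1/lam)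
                (fun l => ⟨hζnn l, hζle l⟩))
            by_cases hl : l = k
            · simp [hl, hcRdef]
            · simp only [if_neg hl, hcRdef]
              refine mul_le_mul_of_nonneg_right ?_ (hζnn l)
              exact div_le_div_of_nonneg_left (hRpos k l (fun h => hl (h ▸ rfl))) (hRkkpos k)
                (hRQden k)
          · -- A-part bounded by γ M / (lam - R k k)
            have hstep : (∑' l, if l = k then 0 else (A k l/(lam - Q k k)) * ζ l)
                ≤ (∑' l, if l = k then 0 else (A k l/(lam - Q k k)) * M) := by
              refine Summable.tsum_le_tsum (fun l => ?_) hS2 ?_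
              · by_cases hl : l = k
                · simp [hl]
                · simp only [if_neg hl]
                  exact mul_le_mul_of_nonneg_left (hζleM l)
                    (div_nonneg (hApos k l (fun h => hl (h ▸ rfl))) (hQkkpos k).le)
              · have : Summable (fun l => ((if l = k then 0 else A k l)/(lam - Q k k)) * M) :=
                  (((summable_offd hAstable k).div_const _).mul_right _)
                refine this.congr fun l => ?_
                by_cases hl : l = k <;> simp [hl]
            have heval : (∑' l, if l = k then 0 else (A k l/(lam - Q k k)) * M)
                = ((-A k k)/(lam - Q k k)) * M := by
              have h1 : ∀ l, (if l = k then 0 else (A k l/(lam - Q k k)) * M)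
                  = ((if l = k then 0 else A k l)/(lam - Q k k)) * M := by
                intro l
                by_cases hl : l = k <;> simp [hl]
              simp only [h1]
              rw [tsum_mul_right, tsum_div_const, tsum_offd hAstable hAcons k]
            have hfinal : ((-A k k)/(lam - Q k k)) * M ≤ γ*M/(lam - R k k) := by
              have hAk : -A k k ≤ γ := haγ k
              have hAk0 : 0 ≤ -A k k := by linarith [hAdiag k]
              have hQRk : lam - Q k k = (lam - R k k) + (-A k k) := by
                have : Q k k = R k k + A k k := rfl
                rw [this]; ring
              rw [div_mul_eq_mul_div, div_le_div_iff₀ (hQkkpos k) (hRkkpos k), hQRk]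
              nlinarith [mul_nonneg (mul_nonneg (sub_nonneg.mpr hAk) hM0) (hRkkpos k).le,
                mul_nonneg (mul_nonneg hγ0 hM0) hAk0]
            calc (∑' l, if l = k then 0 else (A k l/(lam - Q k k)) * ζ l)
                ≤ _ := hstep
              _ = _ := heval
              _ ≤ _ := hfinal
  -- the auxiliary sequence v
  set v : ℕ → ℕ → ℝ := fun N k => 1 - lam * ∑ n ∈ Finset.range N, u n k with hvdef
  have hv0 : ∀ N k, 0 ≤ v N k := by
    intro N k
    have := hpartial_le N k
    show 0 ≤ 1 - lam * ∑ n ∈ Finset.range N, u n k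
    have h2 : lam * ∑ n ∈ Finset.range N, u n k ≤ lam * (1/lam) :=
      mul_le_mul_of_nonneg_left this hlam0.le
    rw [mul_one_div, div_self hlam0.ne'] at h2
    linarith
  have hv1 : ∀ N k, v N k ≤ 1 := by
    intro N k
    show 1 - lam * ∑ n ∈ Finset.range N, u n k ≤ 1
    have : 0 ≤ lam * ∑ n ∈ Finset.range N, u n k :=
      mul_nonneg hlam0.le (Finset.sum_nonneg fun n _ => hunn n k)
    linarith
  have hvrec : ∀ N k, v (N+1) k = ∑' l, cR k l * v N l := by
    intro N k
    have hsum1 : ∀ n, Summable (fun l => cR k l * u n l) :=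
      fun n => summable_mul_bound (hcRsummable k) (hcRnn k) (1/lam)
        (fun l => ⟨hunn n l, hule n l⟩)
    have hsum2 : Summable (fun l => cR k l * ∑ n ∈ Finset.range N, u n l) :=
      summable_mul_bound (hcRsummable k) (hcRnn k) (1/lam)
        (fun l => ⟨Finset.sum_nonneg fun n _ => hunn n l, hpartial_le N l⟩)
    have hexp : ∀ l, cR k l * v N l
        = cR k l - lam * (cR k l * ∑ n ∈ Finset.range N, u n l) := by
      intro l
      show cR k l * (1 - lam * ∑ n ∈ Finset.range N, u n l) = _
      ring
    simp only [hexp]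
    rw [Summable.tsum_sub (hcRsummable k) (Summable.mul_left lam hsum2), tsum_mul_left (a := lam),
      hcRtsum k]
    have hswap : (∑' l, cR k l * ∑ n ∈ Finset.range N, u n l)
        = ∑ n ∈ Finset.range N, u (n+1) k := by
      have h1 : ∀ l, cR k l * ∑ n ∈ Finset.range N, u n l
          = ∑ n ∈ Finset.range N, cR k l * u n l := by
        intro l; rw [Finset.mul_sum]
      simp only [h1]
      rw [Summable.tsum_finsetSum (fun n _ => hsum1 n)]
      refine Finset.sum_congr rfl fun n _ => ?_
      rw [hurec n k]
      refine tsum_congr fun l => ?_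
      by_cases hl : l = k <;> simp [hcRdef, hl]
    rw [hswap]
    have hvexp : v (N+1) k = 1 - lam * ∑ n ∈ Finset.range (N+1), u n k := rfl
    have hval : (-R k k)/(lam - R k k) = 1 - lam * u 0 k := by
      rw [hu0 k, mul_one_div, eq_sub_iff_add_eq, ← add_div,
        show -R k k + lam = lam - R k k by ring, div_self (hRkkpos k).ne']
    rw [hvexp, Finset.sum_range_succ', hval]
    ring
  have hvtend : ∀ k, Tendsto (fun N => v N k) atTop (nhds 0) := by
    intro k
    have h1 : Tendsto (fun N => ∑ n ∈ Finset.range N, u n k) atTop (nhds (1/lam)) := by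
      rw [← husum k]
      exact (husummable k).hasSum.tendsto_sum_nat
    have h2 := (h1.const_mul lam).const_sub 1
    have : (1:ℝ) - lam * (1/lam) = 0 := by
      field_simp; norm_num
    rw [this] at h2
    exact h2
  -- the inductive bound
  have hclaim : ∀ N k, ζ k ≤ γ*M*(∑ n ∈ Finset.range N, u n k) + (1/lam) * v N k := by
    intro N
    induction N with
    | zero =>
      intro k
      simp only [Finset.range_zero, Finset.sum_empty, mul_zero, zero_add]
      have : v 0 k = 1 := by
        show (1:ℝ) - lam * ∑ n ∈ Finset.range 0, u n k = 1
        simp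
      rw [this, mul_one]
      exact hζle k
    | succ N ih =>
      intro k
      have hboundl : ∀ l, ζ l ≤ γ*M*(∑ n ∈ Finset.range N, u n l) + (1/lam) * v N l := ih
      have hsumS : Summable (fun l => cR k l * ∑ n ∈ Finset.range N, u n l) :=
        summable_mul_bound (hcRsummable k) (hcRnn k) (1/lam)
          (fun l => ⟨Finset.sum_nonneg fun n _ => hunn n l, hpartial_le N l⟩)
      have hsumv : Summable (fun l => cR k l * v N l) :=
        summable_mul_bound (hcRsummable k) (hcRnn k) 1 (fun l => ⟨hv0 N l, hv1 N l⟩)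
      have hsumζ : Summable (fun l => cR k l * ζ l) :=
        summable_mul_bound (hcRsummable k) (hcRnn k) (1/lam) (fun l => ⟨hζnn l, hζle l⟩)
      have hsumRHS : Summable (fun l => cR k l *
          (γ*M*(∑ n ∈ Finset.range N, u n l) + (1/lam) * v N l)) := by
        have h1 : Summable (fun l => γ*M*(cR k l * ∑ n ∈ Finset.range N, u n l)
            + (1/lam)*(cR k l * v N l)) :=
          ((hsumS.mul_left _).add (hsumv.mul_left _))
        refine h1.congr fun l => ?_
        ring
      calc ζ k ≤ (∑' l, cR k l * ζ l) + γ*M/(lam - R k k) := hkey k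
        _ ≤ (∑' l, cR k l * (γ*M*(∑ n ∈ Finset.range N, u n l) + (1/lam) * v N l))
            + γ*M/(lam - R k k) := by
            gcongr ?_ + γ*M/(lam - R k k)
            refine Summable.tsum_le_tsum (fun l => ?_) hsumζ hsumRHS
            exact mul_le_mul_of_nonneg_left (hboundl l) (hcRnn k l)
        _ = γ*M*(∑' l, cR k l * ∑ n ∈ Finset.range N, u n l)
            + (1/lam) * (∑' l, cR k l * v N l) + γ*M/(lam - R k k) := by
            rw [← tsum_mul_left (a := γ*M), ← tsum_mul_left (a := 1/lam),
              ← Summable.tsum_add (hsumS.mul_left _) (hsumv.mul_left _)]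
            congr 1
            refine tsum_congr fun l => ?_
            ring
        _ = γ*M*(∑ n ∈ Finset.range N, u (n+1) k) + (1/lam) * v (N+1) k
            + γ*M*u 0 k := by
            rw [hvrec N k]
            congr 2
            · congr 1
              have h1 : ∀ l, cR k l * ∑ n ∈ Finset.range N, u n l
                  = ∑ n ∈ Finset.range N, cR k l * u n l := fun l => Finset.mul_sum _ _ _
              simp only [h1]
              rw [Summable.tsum_finsetSum (fun n _ => summable_mul_bound (hcRsummable k) (hcRnn k) (1/lam)
                (fun l => ⟨hunn n l, hule n l⟩))]
              refine Finset.sum_congr rfl fun n _ => ?_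
              rw [hurec n k]
              refine tsum_congr fun l => ?_
              by_cases hl : l = k <;> simp [hcRdef, hl]
            · rw [hu0 k, mul_one_div]
        _ = γ*M*(∑ n ∈ Finset.range (N+1), u n k) + (1/lam) * v (N+1) k := by
            rw [Finset.sum_range_succ']
            ring
  -- conclude ζ = 0
  have hζbound : ∀ k, ζ k ≤ γ*M*(1/lam) := by
    intro k
    have hb : ∀ N, ζ k ≤ γ*M*(1/lam) + (1/lam) * v N k := by
      intro N
      calc ζ k ≤ γ*M*(∑ n ∈ Finset.range N, u n k) + (1/lam) * v N k := hclaim N k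
        _ ≤ γ*M*(1/lam) + (1/lam) * v N k :=
            add_le_add_left
              (mul_le_mul_of_nonneg_left (hpartial_le N k) (mul_nonneg hγ0 hM0)) _
    have htend : Tendsto (fun N => γ*M*(1/lam) + (1/lam) * v N k) atTop
        (nhds (γ*M*(1/lam))) := by
      have := ((hvtend k).const_mul (1/lam)).const_add (γ*M*(1/lam))
      simpa using this
    exact ge_of_tendsto' htend hb
  have hMzero : M = 0 := by
    have h1 : M ≤ γ*M*(1/lam) := ciSup_le hζbound
    have h3 : M * lam ≤ γ * M := by
      rw [mul_one_div, le_div_iff₀ hlam0] at h1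
      linarith
    rw [hlamdef] at h3
    have h4 : M ≤ 0 := by nlinarith
    exact le_antisymm h4 hM0
  have hζzero : ∀ k, ζ k = 0 := fun k => le_antisymm (hMzero ▸ hζleM k) (hζnn k)
  have hzzero : ∀ k, z k = 0 := by
    intro k
    have := hζzero k
    rw [hζdef] at this
    rcases (ENNReal.toReal_eq_zero_iff _).mp this with h | h
    · exact h
    · exact absurd h (hz_ne_top k)
  -- upgrade: WB Q = 1 a.e. on (0,∞)
  have hae : ∀ k, (fun s => WB Q k s) =ᵐ[volume.restrict (Ioi (0:ℝ))] fun _ => (1:ℝ≥0∞) := by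
    intro k
    have hmeas : Measurable (fun s => ENNReal.ofReal (Real.exp (-lam * s)) * D k s) :=
      ((Real.continuous_exp.comp (continuous_const.mul continuous_id)).measurable.ennreal_ofReal).mul
        (hDmeas k)
    have h0 := (lintegral_eq_zero_iff hmeas).mp (hzzero k)
    filter_upwards [h0] with s hs
    have hexp : ENNReal.ofReal (Real.exp (-lam * s)) ≠ 0 := by
      simp only [ne_eq, ENNReal.ofReal_eq_zero, not_le]
      exact Real.exp_pos _
    have hD0 : D k s = 0 := by
      rcases mul_eq_zero.mp hs with h | h
      · exact absurd h hexp
      · exact h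
    have hD0' : (1:ℝ≥0∞) - WB Q k s = 0 := hD0
    have hle1 := WB_le_one hQpos hQsum hQcons k s
    have := tsub_eq_zero_iff_le.mp hD0'
    exact le_antisymm hle1 this
  have hWQ : ∀ k t, 0 ≤ t → WB Q k t = 1 := by
    intro k t ht
    rw [WB_eq k ht]
    have hKW : Kop Q (WB Q) k t = Kop Q (fun _ _ => (1:ℝ≥0∞)) k t := by
      unfold Kop
      refine tsum_congr fun l => ?_
      by_cases hl : l = k
      · simp [hl]
      · simp only [if_neg hl]
        refine lintegral_congr_ae ?_
        have h1 := ae_restrict_of_ae_restrict_of_subset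
          (Ioc_subset_Ioi_self : Ioc (0:ℝ) t ⊆ Ioi 0) (hae l)
        filter_upwards [h1] with s hs
        rw [hs]
    rw [hKW, Kop_one hQpos hQsum hQcons k ht]
  -- finish
  intro i t ht
  calc (∑' j, ∑' n, Qn n i j t) = ∑' n, ∑' j, Qn n i j t := ENNReal.tsum_comm
    _ = ∑' n, Gs Q n i t := by
        refine tsum_congr fun n => ?_
        exact (tsum_congr fun j => (hgQ n i j t ht).symm)
    _ = WB Q i t := rfl
    _ = 1 := hWQ i t ht
end
end
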